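/- arXiv:2210.14728 — 7 statements merged into one kernel-verified Lean document; each statement's English description precedes it below -/
import Mathlib

section
/- Let λ > 0. If u : ℝ → ℝ is twice continuously differentiable on [0, ∞), satisfies (1/2)·u''(x) + (λ/2)·(u(x) − 1)² = 0 for all x ≥ 0, u(0) = 0, and 0 ≤ u(x) ≤ 1 for all x ≥ 0, then u(x) = 1 − 1/(√(λ/6)·x + 1)² for all x ≥ 0. In particular, the boundary value problem has exactly one solution with values in [0, 1]. -/
open Set Real

private lemma sq_eq_helper {a b : ℝ} (ha : 0 ≤ a) (hb : 0 ≤ b) (h : a^2 = b^2) : a = b := by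
  calc a = Real.sqrt (a^2) := (Real.sqrt_sq ha).symm
  _ = Real.sqrt (b^2) := by rw [h]
  _ = b := Real.sqrt_sq hb

private lemma cube_lip_one {a b : ℝ} (hb0 : 0 ≤ b) (hba : b ≤ a) (ha1 : a ≤ 1) :
    a * Real.sqrt a - b * Real.sqrt b ≤ 2 * (a - b) := by
  set sa := Real.sqrt a with hsa
  set sb := Real.sqrt b with hsb
  have ha0 : 0 ≤ a := le_trans hb0 hba
  have h1 : sa^2 = a := Real.sq_sqrt ha0
  have h2 : sb^2 = b := Real.sq_sqrt hb0
  have h3 : sb ≤ sa := Real.sqrt_le_sqrt hba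
  have h4 : sa ≤ 1 := by
    rw [show (1:ℝ) = Real.sqrt 1 by simp [Real.sqrt_one]]
    exact Real.sqrt_le_sqrt ha1
  have h5 : 0 ≤ sb := Real.sqrt_nonneg b
  have key : 0 ≤ (sa - sb) * (2*sa + 2*sb - sa^2 - sa*sb - sb^2) := by
    apply mul_nonneg (by linarith)
    nlinarith
  nlinarith [key]

private lemma cube_mono {a b : ℝ} (hb0 : 0 ≤ b) (hba : b ≤ a) :
    b * Real.sqrt b ≤ a * Real.sqrt a := by
  have := Real.sqrt_le_sqrt hba
  have := Real.sqrt_nonneg b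
  nlinarith

private lemma cube_lip {a b : ℝ} (ha : a ∈ Icc (0:ℝ) 1) (hb : b ∈ Icc (0:ℝ) 1) :
    |a * Real.sqrt a - b * Real.sqrt b| ≤ 2 * |a - b| := by
  rcases le_total b a with h | h
  · have h1 : 0 ≤ a * Real.sqrt a - b * Real.sqrt b := sub_nonneg.2 (cube_mono hb.1 h)
    rw [abs_of_nonneg h1, abs_of_nonneg (by linarith)]
    exact cube_lip_one hb.1 h ha.2
  · have h1 : 0 ≤ b * Real.sqrt b - a * Real.sqrt a := sub_nonneg.2 (cube_mono ha.1 h)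
    rw [abs_sub_comm, abs_sub_comm a b, abs_of_nonneg h1, abs_of_nonneg (by linarith)]
    exact cube_lip_one ha.1 h hb.2

private lemma monotoneOn_aux {f f' : ℝ → ℝ} {a : ℝ} (hc : ContinuousOn f (Ici a))
    (hd : ∀ x, a < x → HasDerivAt f (f' x) x) (hn : ∀ x, a < x → 0 ≤ f' x) :
    MonotoneOn f (Ici a) := by
  apply monotoneOn_of_deriv_nonneg (convex_Ici a) hc
  · intro x hx
    rw [interior_Ici] at hx
    exact (hd x hx).differentiableAt.differentiableWithinAt
  · intro x hx
    rw [interior_Ici] at hx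
    rw [(hd x hx).deriv]
    exact hn x hx

private lemma antitoneOn_aux {f f' : ℝ → ℝ} {a : ℝ} (hc : ContinuousOn f (Ici a))
    (hd : ∀ x, a < x → HasDerivAt f (f' x) x) (hn : ∀ x, a < x → f' x ≤ 0) :
    AntitoneOn f (Ici a) := by
  apply antitoneOn_of_deriv_nonpos (convex_Ici a) hc
  · intro x hx
    rw [interior_Ici] at hx
    exact (hd x hx).differentiableAt.differentiableWithinAt
  · intro x hx
    rw [interior_Ici] at hx
    rw [(hd x hx).deriv]
    exact hn x hx

set_option maxHeartbeats 2000000 in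
/-- Uniqueness: any C² solution on [0,∞) of (1/2)·u'' + (λ/2)·(u − 1)² = 0 with
u(0) = 0 and 0 ≤ u ≤ 1 equals 1 − 1/(√(λ/6)·x + 1)². -/
theorem stmt_1 (lam : ℝ) (hlam : 0 < lam) (u : ℝ → ℝ)
    (hreg : ContDiffOn ℝ 2 u (Set.Ici 0))
    (hode : ∀ x ≥ 0, (1 / 2) * iteratedDerivWithin 2 u (Set.Ici 0) x
      + (lam / 2) * (u x - 1) ^ 2 = 0)
    (h0 : u 0 = 0)
    (hbd : ∀ x ≥ 0, 0 ≤ u x ∧ u x ≤ 1) :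
    ∀ x ≥ 0, u x = 1 - 1 / (Real.sqrt (lam / 6) * x + 1) ^ 2 := by
  have huniq : UniqueDiffOn ℝ (Set.Ici (0:ℝ)) := uniqueDiffOn_Ici 0
  set c : ℝ := Real.sqrt (lam/6) with hcdef
  have hc2 : c^2 = lam/6 := Real.sq_sqrt (by positivity)
  have hc0 : 0 < c := Real.sqrt_pos.2 (by positivity)
  set U1 : ℝ → ℝ := derivWithin u (Set.Ici 0) with hU1def
  have hu_diff : DifferentiableOn ℝ u (Set.Ici 0) := hreg.differentiableOn (by norm_num)
  have hU1_cd : ContDiffOn ℝ 1 U1 (Set.Ici 0) := hreg.derivWithin huniq (by norm_num)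
  have hU1_cont : ContinuousOn U1 (Set.Ici 0) := hU1_cd.continuousOn
  have hu_cont : ContinuousOn u (Set.Ici 0) := hreg.continuousOn
  -- second derivative identity
  have h2nd : ∀ x ∈ Set.Ici (0:ℝ), derivWithin U1 (Set.Ici 0) x = -lam * (u x - 1)^2 := by
    intro x hx
    have h1 : iteratedDerivWithin 2 u (Set.Ici 0) x = derivWithin U1 (Set.Ici 0) x := by
      rw [show (2:ℕ) = 1 + 1 from rfl, iteratedDerivWithin_succ']
      rw [iteratedDerivWithin_one]
    have h3 := hode x hx
    rw [h1] at h3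
    linarith
  -- derivatives as honest HasDerivAt for x > 0
  have huD : ∀ x : ℝ, 0 < x → HasDerivAt u (U1 x) x := by
    intro x hx
    exact ((hu_diff x (le_of_lt hx)).hasDerivWithinAt).hasDerivAt (Ici_mem_nhds hx)
  have hU1D : ∀ x : ℝ, 0 < x → HasDerivAt U1 (-lam * (u x - 1)^2) x := by
    intro x hx
    have := ((hU1_cd.differentiableOn one_ne_zero x (le_of_lt hx)).hasDerivWithinAt).hasDerivAt
      (Ici_mem_nhds hx)
    rwa [h2nd x (le_of_lt hx)] at this
  -- U1 is antitone
  have hU1anti : AntitoneOn U1 (Set.Ici 0) := by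
    apply antitoneOn_aux hU1_cont hU1D
    intro x hx
    nlinarith [sq_nonneg (u x - 1)]
  -- Claim A : U1 ≥ 0
  have hA : ∀ x ∈ Set.Ici (0:ℝ), 0 ≤ U1 x := by
    by_contra hcon
    push_neg at hcon
    obtain ⟨a, ha, hUa⟩ := hcon
    have hIa : Set.Ici a ⊆ Set.Ici (0:ℝ) := Set.Ici_subset_Ici.2 ha
    have hanti : AntitoneOn (fun x => u x - U1 a * x) (Set.Ici a) := by
      apply antitoneOn_aux (f' := fun x => U1 x - U1 a)
      · exact (hu_cont.mono hIa).sub (continuousOn_const.mul continuousOn_id)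
      · intro x hx
        have := (huD x (lt_of_le_of_lt ha hx)).fun_sub (((hasDerivAt_id x).const_mul (U1 a)))
        simpa using this
      · intro x hx
        have : U1 x ≤ U1 a := hU1anti (by exact ha) (hIa (le_of_lt hx)) (le_of_lt hx)
        linarith
    set x₀ : ℝ := a + (u a + 1)/(-U1 a) with hx₀def
    clear_value x₀
    have hfrac : 0 < (u a + 1)/(-U1 a) := by
      apply div_pos
      · linarith [(hbd a ha).1]
      · linarith
    have hax : a ≤ x₀ := by linarith
    have := hanti (Set.self_mem_Ici) hax hax
    have hux : u x₀ ≤ u a + U1 a * ((u a + 1)/(-U1 a)) := by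
      simp only [hx₀def] at this ⊢
      nlinarith [this]
    have hmul : U1 a * ((u a + 1)/(-U1 a)) = -(u a + 1) := by
      have hne : -U1 a ≠ 0 := ne_of_gt (by linarith)
      have hne' : U1 a ≠ 0 := ne_of_lt hUa
      field_simp
    rw [hmul] at hux
    have := (hbd x₀ (le_trans ha hax)).1
    linarith
  -- u is monotone
  have hu_mono : MonotoneOn u (Set.Ici 0) :=
    monotoneOn_aux hu_cont huD (fun x hx => hA x (le_of_lt hx))
  -- Claim B : sup u = 1
  have hB : ∀ η : ℝ, 0 < η → ∃ x ≥ (0:ℝ), 1 - η < u x := by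
    intro η hη
    by_contra hcon
    push_neg at hcon
    have hanti : AntitoneOn (fun x => U1 x + lam * η^2 * x) (Set.Ici 0) := by
      apply antitoneOn_aux (f' := fun x => -lam * (u x - 1)^2 + lam * η^2)
      · exact hU1_cont.add (continuousOn_const.mul continuousOn_id)
      · intro x hx
        have := (hU1D x hx).fun_add (((hasDerivAt_id x).const_mul (lam * η^2)))
        simpa using this
      · intro x hx
        have h1 : u x ≤ 1 - η := hcon x (le_of_lt hx)
        have hk : η^2 ≤ (1 - u x)^2 := pow_le_pow_left₀ hη.le (by linarith) 2
        nlinarith [mul_le_mul_of_nonneg_left hk hlam.le]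
    set x₀ : ℝ := (U1 0 + 1)/(lam * η^2) with hx₀def
    clear_value x₀
    have hx₀ : 0 < x₀ := by
      rw [hx₀def]
      apply div_pos
      · linarith [hA 0 Set.self_mem_Ici]
      · positivity
    have := hanti Set.self_mem_Ici (le_of_lt hx₀) (le_of_lt hx₀)
    simp only [mul_zero, add_zero] at this
    have hmul : lam * η^2 * x₀ = U1 0 + 1 := by
      have hne : lam * η^2 ≠ 0 := by positivity
      rw [hx₀def]
      field_simp
    have : U1 x₀ ≤ -1 := by linarith
    linarith [hA x₀ (le_of_lt hx₀)]
  -- Claim C : inf U1 = 0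
  have hC : ∀ ε : ℝ, 0 < ε → ∃ x ≥ (0:ℝ), U1 x < ε := by
    intro ε hε
    by_contra hcon
    push_neg at hcon
    have hmono : MonotoneOn (fun x => u x - ε * x) (Set.Ici 0) := by
      apply monotoneOn_aux (f' := fun x => U1 x - ε)
      · exact hu_cont.sub (continuousOn_const.mul continuousOn_id)
      · intro x hx
        have := (huD x hx).fun_sub (((hasDerivAt_id x).const_mul ε))
        simpa using this
      · intro x hx
        linarith [hcon x (le_of_lt hx)]
    have h2ε : (0:ℝ) ≤ 2/ε := by positivity
    have := hmono Set.self_mem_Ici h2ε h2ε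
    simp only [mul_zero, sub_zero, h0] at this
    have hmul : ε * (2/ε) = 2 := by
      have hne : ε ≠ 0 := ne_of_gt hε
      field_simp
    have : 2 ≤ u (2/ε) := by nlinarith [this]
    linarith [(hbd (2/ε) h2ε).2]
  -- Energy function
  set E : ℝ → ℝ := fun x => (1/2)*(U1 x)^2 + (lam/3)*(u x - 1)^3 with hEdef
  have hE_cont : ContinuousOn E (Set.Ici 0) := by
    apply ContinuousOn.add
    · exact continuousOn_const.mul (hU1_cont.pow 2)
    · exact continuousOn_const.mul ((hu_cont.sub continuousOn_const).pow 3)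
  have hE_deriv : ∀ x : ℝ, 0 < x → HasDerivAt E 0 x := by
    intro x hx
    have d1 : HasDerivAt (fun y => (1/2)*(U1 y)^2)
        ((1/2)*(2 * U1 x ^ 1 * (-lam * (u x - 1)^2))) x := ((hU1D x hx).pow 2).const_mul (1/2)
    have d2 : HasDerivAt (fun y => (lam/3)*(u y - 1)^3)
        ((lam/3)*(3 * (u x - 1) ^ 2 * (U1 x))) x := (((huD x hx).sub_const 1).pow 3).const_mul (lam/3)
    have := d1.fun_add d2
    refine this.congr_deriv ?_
    ring
  have hEc : ∀ x ∈ Set.Ici (0:ℝ), E x = E 0 := by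
    have hm : MonotoneOn E (Set.Ici 0) :=
      monotoneOn_aux hE_cont hE_deriv (fun x _ => le_rfl)
    have ha : AntitoneOn E (Set.Ici 0) :=
      antitoneOn_aux hE_cont hE_deriv (fun x _ => le_rfl)
    intro x hx
    exact le_antisymm (ha Set.self_mem_Ici hx hx) (hm Set.self_mem_Ici hx hx)
  -- E 0 = 0
  have hE0 : E 0 = 0 := by
    have key : ∀ ε : ℝ, 0 < ε → ε ≤ 1 → |E 0| ≤ (1/2 + lam/3)*ε := by
      intro ε hε hε1
      obtain ⟨x₁, hx₁0, hx₁⟩ := hB ε hε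
      obtain ⟨x₂, hx₂0, hx₂⟩ := hC ε hε
      obtain ⟨x, hxd⟩ : ∃ x : ℝ, x = max x₁ x₂ := ⟨_, rfl⟩
      have hx0 : (0:ℝ) ≤ x := by rw [hxd]; exact le_trans hx₁0 (le_max_left _ _)
      have h1 : 1 - ε < u x := by
        rw [hxd]
        exact lt_of_lt_of_le hx₁ (hu_mono hx₁0 (hxd ▸ hx0) (le_max_left _ _))
      have h2 : U1 x < ε := by
        rw [hxd]
        exact lt_of_le_of_lt (hU1anti hx₂0 (hxd ▸ hx0) (le_max_right _ _)) hx₂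
      have h3 : u x ≤ 1 := (hbd x hx0).2
      have h4 : 0 ≤ U1 x := hA x hx0
      have hEx : E 0 = (1/2)*(U1 x)^2 + (lam/3)*(u x - 1)^3 := (hEc x hx0).symm
      have hb0 : 0 ≤ 1 - u x := by linarith
      have hb1 : 1 - u x ≤ ε := by linarith
      have hcube : (1 - u x)^3 ≤ ε^3 := pow_le_pow_left₀ hb0 hb1 3
      have hBpos : 0 ≤ (1 - u x)^3 := pow_nonneg hb0 3
      have hε2 : ε^2 ≤ 1 := pow_le_one₀ hε.le hε1
      have hε3 : ε^3 ≤ ε := by nlinarith [mul_le_mul_of_nonneg_left hε2 hε.le]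
      have hε2' : ε^2 ≤ ε := by nlinarith [mul_le_mul_of_nonneg_left hε1 hε.le]
      have hsq : U1 x^2 ≤ ε^2 := by nlinarith [mul_le_mul h2.le h2.le h4 hε.le]
      have h5 : (u x - 1)^3 = -(1 - u x)^3 := by ring
      have k0 : (lam/3)*(u x - 1)^3 = -((lam/3)*(1 - u x)^3) := by ring
      have k1 : (lam/3) * (1 - u x)^3 ≤ (lam/3) * ε^3 :=
        mul_le_mul_of_nonneg_left hcube (by linarith)
      have k2 : (lam/3) * ε^3 ≤ (lam/3) * ε :=
        mul_le_mul_of_nonneg_left hε3 (by linarith)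
      have k3 : 0 ≤ (lam/3) * (1 - u x)^3 := mul_nonneg (by linarith) hBpos
      rw [abs_le]
      constructor
      · rw [hEx]
        linarith [k0, k1, k2, sq_nonneg (U1 x)]
      · rw [hEx]
        linarith [k0, k3, hsq, hε2']
    by_contra hne
    have hKpos : (0:ℝ) < 1/2 + lam/3 := by linarith
    set ε : ℝ := min 1 (|E 0|/(2*(1/2 + lam/3))) with hεdef
    clear_value ε
    have habs : 0 < |E 0| := abs_pos.2 hne
    have hε : 0 < ε := by rw [hεdef]; exact lt_min one_pos (by positivity)
    have hε1 : ε ≤ 1 := by rw [hεdef]; exact min_le_left _ _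
    have h1 := key ε hε hε1
    have h2' : ε ≤ |E 0|/(2*(1/2 + lam/3)) := by rw [hεdef]; exact min_le_right _ _
    have h2 : (1/2 + lam/3) * ε ≤ (1/2 + lam/3) * (|E 0|/(2*(1/2 + lam/3))) :=
      mul_le_mul_of_nonneg_left h2' hKpos.le
    have h3 : (1/2 + lam/3) * (|E 0|/(2*(1/2 + lam/3))) = |E 0|/2 := by
      field_simp
    linarith
  -- Energy identity
  have h2c : Real.sqrt (2*lam/3) = 2*c := by
    apply sq_eq_helper (Real.sqrt_nonneg _) (by positivity)
    rw [Real.sq_sqrt (by positivity)]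
    rw [mul_pow, hc2]
    ring
  have hEn : ∀ x : ℝ, 0 ≤ x → U1 x = Real.sqrt (2*lam/3) * ((1 - u x) * Real.sqrt (1 - u x)) := by
    intro x hx
    have hEx : (1/2)*(U1 x)^2 + (lam/3)*(u x - 1)^3 = 0 := by
      have := hEc x hx
      rw [hE0] at this
      exact this
    have hb0 : 0 ≤ 1 - u x := by linarith [(hbd x hx).2]
    have hcube : (u x - 1)^3 = -(1 - u x)^3 := by ring
    have hsq : (U1 x)^2 = (2*lam/3) * (1 - u x)^3 := by
      rw [hcube] at hEx
      linarith
    apply sq_eq_helper (hA x hx) (by positivity)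
    rw [hsq, mul_pow, mul_pow, Real.sq_sqrt (by positivity), Real.sq_sqrt hb0]
    ring
  -- the ODE vector field
  obtain ⟨F, hFdef⟩ : ∃ F : ℝ → ℝ, F = fun y => -(Real.sqrt (2*lam/3)) * (y * Real.sqrt y) :=
    ⟨_, rfl⟩
  have hK : LipschitzOnWith (Real.toNNReal (2 * Real.sqrt (2*lam/3))) F (Set.Icc 0 1) := by
    apply LipschitzOnWith.of_dist_le_mul
    intro p hp q hq
    rw [Real.dist_eq, Real.dist_eq, hFdef]
    have hfac : -(Real.sqrt (2*lam/3)) * (p * Real.sqrt p) - -(Real.sqrt (2*lam/3)) * (q * Real.sqrt q)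
        = -(Real.sqrt (2*lam/3)) * (p * Real.sqrt p - q * Real.sqrt q) := by ring
    simp only
    rw [hfac, abs_mul, abs_neg, abs_of_nonneg (Real.sqrt_nonneg _)]
    have hcoe : ((Real.toNNReal (2 * Real.sqrt (2*lam/3))) : ℝ) = 2 * Real.sqrt (2*lam/3) :=
      Real.coe_toNNReal _ (by positivity)
    rw [hcoe]
    calc Real.sqrt (2*lam/3) * |p * Real.sqrt p - q * Real.sqrt q|
        ≤ Real.sqrt (2*lam/3) * (2 * |p - q|) :=
          mul_le_mul_of_nonneg_left (cube_lip hp hq) (Real.sqrt_nonneg _)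
      _ = 2 * Real.sqrt (2*lam/3) * |p - q| := by ring
  obtain ⟨g, hgdef⟩ : ∃ g : ℝ → ℝ, g = fun x => 1 - u x := ⟨_, rfl⟩
  obtain ⟨w, hwdef⟩ : ∃ w : ℝ → ℝ, w = fun x => ((c*x+1)^2)⁻¹ := ⟨_, rfl⟩
  -- derivative facts for g
  have hgd : ∀ t : ℝ, 0 ≤ t → HasDerivWithinAt g (F (g t)) (Set.Ici t) t := by
    intro t ht
    have hFg : F (g t) = -(U1 t) := by
      rw [hFdef, hgdef]
      simp only
      rw [hEn t ht]
      ring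
    rw [hFg]
    rcases eq_or_lt_of_le ht with h | h
    · have hd : HasDerivWithinAt u (U1 t) (Set.Ici (0:ℝ)) t := by
        rw [← h]
        exact hU1def ▸ (hu_diff 0 Set.self_mem_Ici).hasDerivWithinAt
      have := hd.const_sub 1
      rw [← hgdef] at this
      rwa [← h] at this ⊢
    · have := ((huD t h).const_sub 1).hasDerivWithinAt (s := Set.Ici t)
      rwa [← hgdef] at this
  have hwd : ∀ t : ℝ, 0 ≤ t → HasDerivAt w (F (w t)) t := by
    intro t ht
    have hct : 0 ≤ c * t := mul_nonneg hc0.le ht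
    have hp : 0 < c*t+1 := by linarith
    have hp2 : (c*t+1)^2 ≠ 0 := by positivity
    have hd1 : HasDerivAt (fun x : ℝ => c*x+1) c t := by
      simpa using ((hasDerivAt_id t).const_mul c).add_const 1
    have hd2 := (hd1.fun_pow 2).fun_inv hp2
    rw [hwdef]
    simp only
    refine hd2.congr_deriv ?_
    rw [hFdef]
    simp only
    rw [Real.sqrt_inv, Real.sqrt_sq hp.le, h2c]
    field_simp
    ring
  -- apply uniqueness
  intro x hx
  have hxx : x ∈ Set.Icc (0:ℝ) (x+1) := ⟨hx, by linarith⟩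
  have hEq : Set.EqOn g w (Set.Icc 0 (x+1)) := by
    apply ODE_solution_unique_of_mem_Icc_right (fun _ _ => hK)
    · rw [hgdef]
      exact continuousOn_const.sub (hu_cont.mono (fun y hy => hy.1))
    · intro t htm
      exact (hgd t htm.1).mono (fun y hy => hy)
    · intro t htm
      rw [hgdef]
      have := hbd t htm.1
      exact ⟨by simp; linarith [this.2], by simp; linarith [this.1]⟩
    · rw [hwdef]
      apply ContinuousOn.inv₀
      · fun_prop
      · intro t htm
        have hct : 0 ≤ c * t := mul_nonneg hc0.le htm.1
        positivity
    · intro t htm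
      exact (hwd t htm.1).hasDerivWithinAt
    · intro t htm
      have hct : 0 ≤ c * t := mul_nonneg hc0.le htm.1
      rw [hwdef]
      constructor
      · simp only
        positivity
      · simp only
        apply inv_le_one_of_one_le₀
        nlinarith
    · rw [hgdef, hwdef]
      simp [h0]
  have hfin := hEq hxx
  rw [hgdef, hwdef] at hfin
  simp only at hfin
  rw [one_div]
  linarith
end

section
/- Let λ > 0 and t₀ > 0. Suppose u : ℝ → ℝ is twice continuously differentiable on [0, ∞), satisfies (1/2)·u''(x) + (λ/2)·(u(x) − 1)² = 0 for all x ≥ 0, u(0) = 0, and 0 ≤ u(x) ≤ 1 for all x ≥ 0. Suppose r : [0, ∞) × [0, t₀] → ℝ is continuous, is twice continuously differentiable in x and once in t on the interior, satisfies the parabolic equation ∂r/∂t = (1/2)·∂²r/∂x² + (λ/2)·(r − 1)² there, satisfies 0 ≤ r(x, t) ≤ 1 for all (x, t), satisfies r(0, t) = 0 for all t ∈ [0, t₀], satisfies r(x, 0) ≤ u(x) for all x ≥ 0, and satisfies sup_{t ∈ [0, t₀]} |u(x) − r(x, t)| → 0 as x → ∞. Then r(x, t) ≤ u(x) for all x ≥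 0 and t ∈ [0, t₀]. -/
open Filter Set Topology

/-- One-sided Fermat: derivative at a left-accessible max is nonneg. -/
lemma aux_deriv_nonneg_of_isMaxOn {ψ : ℝ → ℝ} {T b d : ℝ}
    (hmax : ∀ t ∈ Set.Icc (0:ℝ) T, ψ t ≤ ψ b)
    (hb : 0 < b) (hbT : b ≤ T) (hd : HasDerivAt ψ d b) : 0 ≤ d := by
  have hs : Tendsto (slope ψ b) (𝓝[≠] b) (𝓝 d) := hasDerivAt_iff_tendsto_slope.mp hd
  have hs' : Tendsto (slope ψ b) (𝓝[<] b) (𝓝 d) :=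
    hs.mono_left (nhdsWithin_mono _ (fun y hy => ne_of_lt hy))
  refine ge_of_tendsto hs' ?_
  filter_upwards [Ioo_mem_nhdsLT_of_mem (⟨hb, le_refl b⟩ : b ∈ Set.Ioc 0 b)] with y hy
  have h1 : ψ y - ψ b ≤ 0 := sub_nonpos.mpr (hmax y ⟨hy.1.le, hy.2.le.trans hbT⟩)
  have h2 : y - b < 0 := sub_neg.mpr hy.2
  have heq : slope ψ b y = (ψ y - ψ b) / (y - b) := by rw [slope_def_field]
  rw [heq]
  exact div_nonneg_iff.mpr (Or.inr ⟨h1, h2.le⟩)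

/-- Second derivative test direction: local max implies f'' ≤ 0. -/
lemma aux_secondDeriv_nonpos_of_isLocalMax {f f' : ℝ → ℝ} {a c : ℝ}
    (hmax : IsLocalMax f a)
    (hf : ∀ᶠ x in 𝓝 a, HasDerivAt f (f' x) x)
    (hf' : HasDerivAt f' c a) : c ≤ 0 := by
  by_contra h
  push_neg at h
  have hfa : f' a = 0 := by
    have h0 := hmax.deriv_eq_zero
    rwa [hf.self_of_nhds.deriv] at h0
  have hs : Tendsto (slope f' a) (𝓝[≠] a) (𝓝 c) := hasDerivAt_iff_tendsto_slope.mp hf'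
  have hs' : Tendsto (slope f' a) (𝓝[>] a) (𝓝 c) :=
    hs.mono_left (nhdsWithin_mono _ (fun y hy => ne_of_gt hy))
  have hpos : ∀ᶠ y in 𝓝[>] a, 0 < slope f' a y := hs'.eventually (eventually_gt_nhds h)
  have hfpos : ∀ᶠ y in 𝓝[>] a, 0 < f' y := by
    filter_upwards [hpos, self_mem_nhdsWithin] with y hy hy'
    rw [slope_def_field, hfa, sub_zero] at hy
    have hya : 0 < y - a := sub_pos.mpr hy'
    have := mul_pos hy hya
    rwa [div_mul_cancel₀ _ hya.ne'] at this
  -- extract a right interval where f' > 0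
  obtain ⟨m, hm, hsub⟩ := (mem_nhdsGT_iff_exists_Ioo_subset).mp hfpos
  -- extract a ball where HasDerivAt and f ≤ f a
  obtain ⟨δ, hδ, hball⟩ := Metric.eventually_nhds_iff.mp (hf.and hmax)
  set p := min m (a + δ) with hp
  have hap : a < p := lt_min hm (by linarith)
  set q := (a + p) / 2 with hq
  have haq : a < q := by rw [hq]; linarith
  have hqp : q < p := by rw [hq]; linarith
  have hcont : ∀ x ∈ Set.Icc a q, ContinuousAt f x := by
    intro x hx
    have hxd : dist x a < δ := by
      rw [Real.dist_eq, abs_of_nonneg (by linarith [hx.1])]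
      have : q ≤ a + δ := by
        rw [hq]; have := min_le_right m (a + δ); linarith [hx.2]
      linarith [hx.2, hqp.le, min_le_right m (a + δ)]
    exact ((hball hxd).1).continuousAt
  have hderiv : ∀ x ∈ Set.Ioo a q, 0 < deriv f x := by
    intro x hx
    have hxd : dist x a < δ := by
      rw [Real.dist_eq, abs_of_nonneg (by linarith [hx.1.le])]
      have hql : q < a + δ := lt_of_lt_of_le hqp (min_le_right m (a + δ))
      linarith [hx.2]
    rw [((hball hxd).1).deriv]
    exact hsub ⟨hx.1, lt_of_lt_of_le (lt_of_lt_of_le hx.2 hqp.le) (min_le_left m (a + δ))⟩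
  have hmono : StrictMonoOn f (Set.Icc a q) := by
    apply strictMonoOn_of_deriv_pos (convex_Icc a q)
    · exact fun x hx => (hcont x hx).continuousWithinAt
    · intro x hx
      rw [interior_Icc] at hx
      exact hderiv x hx
  have hlt : f a < f q := hmono ⟨le_refl a, haq.le⟩ ⟨haq.le, le_refl q⟩ haq
  have hqd : dist q a < δ := by
    rw [Real.dist_eq, abs_of_nonneg (by linarith)]
    have hql : q < a + δ := lt_of_lt_of_le hqp (min_le_right m (a + δ))
    linarith
  exact absurd ((hball hqd).2) (not_le.mpr hlt)

set_option maxHeartbeats 1000000 in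
/-- Maximum-principle comparison: a stationary solution u dominates any bounded
solution r of the parabolic equation starting below it, vanishing at the
spatial boundary, and agreeing with u at infinity uniformly in t. -/
theorem stmt_3 (lam t₀ : ℝ) (hlam : 0 < lam) (ht₀ : 0 < t₀)
    (u : ℝ → ℝ) (hureg : ContDiffOn ℝ 2 u (Set.Ici 0))
    (huode : ∀ x ≥ 0, (1 / 2) * iteratedDerivWithin 2 u (Set.Ici 0) x
      + (lam / 2) * (u x - 1) ^ 2 = 0)
    (hu0 : u 0 = 0)
    (hubd : ∀ x ≥ 0, 0 ≤ u x ∧ u x ≤ 1)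
    (r : ℝ → ℝ → ℝ)
    (hrc : ContinuousOn (fun p : ℝ × ℝ => r p.1 p.2) (Set.Ici 0 ×ˢ Set.Icc 0 t₀))
    (hrx : ∀ t ∈ Set.Ioo 0 t₀, ContDiffOn ℝ 2 (fun x => r x t) (Set.Ioi 0))
    (hrt : ∀ x ∈ Set.Ioi (0 : ℝ), ContDiffOn ℝ 1 (fun t => r x t) (Set.Ioo 0 t₀))
    (hpde : ∀ x ∈ Set.Ioi (0 : ℝ), ∀ t ∈ Set.Ioo 0 t₀,
      deriv (fun s => r x s) t
        = (1 / 2) * deriv (deriv fun y => r y t) x + (lam / 2) * (r x t - 1) ^ 2)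
    (hrbd : ∀ x ≥ 0, ∀ t ∈ Set.Icc 0 t₀, 0 ≤ r x t ∧ r x t ≤ 1)
    (hr0 : ∀ t ∈ Set.Icc 0 t₀, r 0 t = 0)
    (hinit : ∀ x ≥ 0, r x 0 ≤ u x)
    (hinf : Filter.Tendsto (fun x => ⨆ t : Set.Icc 0 t₀, |u x - r x t|)
      Filter.atTop (nhds 0)) :
    ∀ x ≥ 0, ∀ t ∈ Set.Icc 0 t₀, r x t ≤ u x := by
  -- Main claim for t < t₀
  have key : ∀ x₀ ≥ (0:ℝ), ∀ t₁ ∈ Set.Ico (0:ℝ) t₀, r x₀ t₁ ≤ u x₀ := by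
    intro x₀ hx₀ t₁ ht₁
    obtain ⟨ht₁0, ht₁t₀⟩ := ht₁
    -- it suffices to show r - u ≤ ε (t₁ + 1) for all ε > 0
    suffices hsuff : ∀ ε > (0:ℝ), r x₀ t₁ - u x₀ ≤ ε * (t₁ + 1) by
      by_contra hC
      push_neg at hC
      have ht1 : (0:ℝ) < t₁ + 1 := by linarith
      have hε : (0:ℝ) < (r x₀ t₁ - u x₀) / (2 * (t₁ + 1)) := by
        apply div_pos (by linarith) (by linarith)
      have h2 := hsuff _ hε
      have heq : (r x₀ t₁ - u x₀) / (2 * (t₁ + 1)) * (t₁ + 1) = (r x₀ t₁ - u x₀) / 2 := by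
        field_simp
      rw [heq] at h2
      linarith
    intro ε hε
    -- choose T with t₁ ≤ T < t₀, T > 0
    set T : ℝ := (t₁ + t₀) / 2 with hT
    have hT0 : 0 < T := by rw [hT]; linarith
    have ht₁T : t₁ ≤ T := by rw [hT]; linarith
    have hTt₀ : T < t₀ := by rw [hT]; linarith
    -- choose X large using hinf
    have hev : ∀ᶠ x in Filter.atTop, (⨆ t : Set.Icc (0:ℝ) t₀, |u x - r x t|) < ε :=
      hinf.eventually (gt_mem_nhds hε)
    obtain ⟨X₀, hX₀⟩ := Filter.eventually_atTop.mp hev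
    set X : ℝ := max X₀ (max x₀ 1) with hXdef
    have hXX₀ : X₀ ≤ X := le_max_left _ _
    have hXx₀ : x₀ ≤ X := le_trans (le_max_left _ _) (le_max_right _ _)
    have hX1 : (1:ℝ) ≤ X := le_trans (le_max_right _ _) (le_max_right _ _)
    have hX0 : (0:ℝ) < X := lt_of_lt_of_le one_pos hX1
    haveI : Nonempty (Set.Icc (0:ℝ) t₀) := ⟨⟨0, le_refl 0, ht₀.le⟩⟩
    have hXbd : ∀ t ∈ Set.Icc (0:ℝ) t₀, |u X - r X t| < ε := by
      intro t ht
      have hbdd : BddAbove (Set.range fun t : Set.Icc (0:ℝ) t₀ => |u X - r X t|) := by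
        refine ⟨1, ?_⟩
        rintro _ ⟨s, rfl⟩
        obtain ⟨hu1, hu2⟩ := hubd X hX0.le
        obtain ⟨hr1, hr2⟩ := hrbd X hX0.le s s.2
        rw [abs_le]; constructor <;> linarith
      calc |u X - r X t| ≤ ⨆ t : Set.Icc (0:ℝ) t₀, |u X - r X t| :=
            le_ciSup hbdd ⟨t, ht⟩
        _ < ε := hX₀ X hXX₀
    -- compact rectangle and maximum of φ
    set K : Set (ℝ × ℝ) := Set.Icc 0 X ×ˢ Set.Icc 0 T with hK
    have hKc : IsCompact K := isCompact_Icc.prod isCompact_Icc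
    have hKne : K.Nonempty := ⟨(0, 0), ⟨⟨le_refl 0, hX0.le⟩, ⟨le_refl 0, hT0.le⟩⟩⟩
    set φ : ℝ × ℝ → ℝ := fun p => r p.1 p.2 - u p.1 - ε * p.2 - ε with hφ
    have hKsub : K ⊆ Set.Ici 0 ×ˢ Set.Icc 0 t₀ := by
      rintro ⟨x, t⟩ ⟨hx, ht⟩
      exact ⟨hx.1, ht.1, ht.2.trans hTt₀.le⟩
    have hφc : ContinuousOn φ K := by
      apply ContinuousOn.sub
      apply ContinuousOn.sub
      apply ContinuousOn.sub
      · exact hrc.mono hKsub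
      · exact (hureg.continuousOn.comp continuous_fst.continuousOn
          (fun p hp => (hKsub hp).1))
      · exact (continuous_const.mul continuous_snd).continuousOn
      · exact continuousOn_const
    obtain ⟨⟨a, b⟩, habK, hmax'⟩ := hKc.exists_isMaxOn hKne hφc
    have hmax : ∀ x t, (x, t) ∈ K →
        r x t - u x - ε * t - ε ≤ r a b - u a - ε * b - ε := fun x t hp =>
      (hmax' hp : φ (x, t) ≤ φ (a, b))
    have hx₀t₁K : (x₀, t₁) ∈ K := ⟨⟨hx₀, hXx₀⟩, ⟨ht₁0, ht₁T⟩⟩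
    -- suffices : φ (a,b) ≤ 0
    suffices hφ0 : r a b - u a - ε * b - ε ≤ 0 by
      have h1 := hmax _ _ hx₀t₁K
      nlinarith [mul_nonneg hε.le ht₁0]
    by_contra hC
    push_neg at hC
    have habK2 : a ∈ Set.Icc (0:ℝ) X ∧ b ∈ Set.Icc (0:ℝ) T := habK
    obtain ⟨⟨ha0, haX⟩, ⟨hb0, hbT⟩⟩ := habK2
    have hbt₀ : b ≤ t₀ := hbT.trans hTt₀.le
    -- a > 0
    have ha_pos : 0 < a := by
      rcases eq_or_lt_of_le ha0 with h | h
      · exfalso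
        rw [← h, hr0 b ⟨hb0, hbt₀⟩, hu0] at hC
        nlinarith [mul_nonneg hε.le hb0]
      · exact h
    -- a < X
    have haX' : a < X := by
      rcases eq_or_lt_of_le haX with h | h
      · exfalso
        have hd : r a b - u a < ε := by
          rw [h]
          have := hXbd b ⟨hb0, hbt₀⟩
          have h2 : r X b - u X ≤ |u X - r X b| := by
            rw [abs_sub_comm]; exact le_abs_self _
          linarith
        nlinarith [mul_nonneg hε.le hb0]
      · exact h
    -- b > 0
    have hb_pos : 0 < b := by
      rcases eq_or_lt_of_le hb0 with h | h
      · exfalso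
        rw [← h] at hC
        have := hinit a ha0
        nlinarith
      · exact h
    have hbmem : b ∈ Set.Ioo 0 t₀ := ⟨hb_pos, lt_of_le_of_lt hbT hTt₀⟩
    -- x-direction derivatives of r(·, b)
    have hrxb := hrx b hbmem
    have hR0d : ∀ x ∈ Set.Ioi (0:ℝ), HasDerivAt (fun y => r y b)
        (deriv (fun y => r y b) x) x := by
      intro x hx
      exact ((hrxb.differentiableOn (by norm_num)).differentiableAt
        (isOpen_Ioi.mem_nhds hx)).hasDerivAt
    have hR1c : ContDiffOn ℝ 1 (deriv fun y => r y b) (Set.Ioi 0) :=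
      hrxb.deriv_of_isOpen isOpen_Ioi (by norm_num)
    have hR1d : HasDerivAt (deriv fun y => r y b)
        (deriv (deriv fun y => r y b) a) a :=
      ((hR1c.differentiableOn (by norm_num)).differentiableAt
        (isOpen_Ioi.mem_nhds ha_pos)).hasDerivAt
    set c2 : ℝ := deriv (deriv fun y => r y b) a with hc2
    -- u derivatives
    have huIoi : ContDiffOn ℝ 2 u (Set.Ioi 0) := hureg.mono Set.Ioi_subset_Ici_self
    have hu1d : ∀ x ∈ Set.Ioi (0:ℝ), HasDerivAt u (deriv u x) x := by
      intro x hx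
      exact ((huIoi.differentiableOn (by norm_num)).differentiableAt
        (isOpen_Ioi.mem_nhds hx)).hasDerivAt
    have hu1c : ContDiffOn ℝ 1 (deriv u) (Set.Ioi 0) :=
      huIoi.deriv_of_isOpen isOpen_Ioi (by norm_num)
    have hu2d : HasDerivAt (deriv u) (deriv (deriv u) a) a :=
      ((hu1c.differentiableOn (by norm_num)).differentiableAt
        (isOpen_Ioi.mem_nhds ha_pos)).hasDerivAt
    set U2 : ℝ := deriv (deriv u) a with hU2
    -- ODE for u at a with genuine derivatives
    have hiter : iteratedDerivWithin 2 u (Set.Ici 0) a = U2 := by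
      have hudw : UniqueDiffWithinAt ℝ (Set.Ici (0:ℝ)) a :=
        (uniqueDiffOn_Ici 0) a (Set.mem_Ici.mpr ha_pos.le)
      rw [show (2:ℕ) = 1 + 1 from rfl, iteratedDerivWithin_succ]
      rw [derivWithin_of_mem_nhds (Ici_mem_nhds ha_pos)]
      have heq : (iteratedDerivWithin 1 u (Set.Ici 0)) =ᶠ[𝓝 a] deriv u := by
        filter_upwards [isOpen_Ioi.mem_nhds (Set.mem_Ioi.mpr ha_pos)] with x hx
        rw [iteratedDerivWithin_one,
          derivWithin_of_mem_nhds (Ici_mem_nhds hx)]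
      rw [heq.deriv_eq]
    have hode_a : (1/2) * U2 + (lam/2) * (u a - 1)^2 = 0 := by
      have := huode a ha_pos.le
      rwa [hiter] at this
    -- local max in x of g := r(·,b) - u at a
    have hglm : IsLocalMax (fun x => r x b - u x) a := by
      filter_upwards [isOpen_Ioo.mem_nhds (⟨ha_pos, haX'⟩ : a ∈ Set.Ioo 0 X)] with x hx
      have h1 := hmax x b ⟨⟨hx.1.le, hx.2.le⟩, ⟨hb0, hbT⟩⟩
      linarith
    have hg2 : c2 - U2 ≤ 0 := by
      apply aux_secondDeriv_nonpos_of_isLocalMax hglm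
        (f' := fun x => (deriv fun y => r y b) x - deriv u x)
      · filter_upwards [isOpen_Ioi.mem_nhds (Set.mem_Ioi.mpr ha_pos)] with x hx
        exact (hR0d x hx).sub (hu1d x hx)
      · exact hR1d.sub hu2d
    -- time direction
    have hψd : HasDerivAt (fun s => r a s) (deriv (fun s => r a s) b) b :=
      (((hrt a (Set.mem_Ioi.mpr ha_pos)).differentiableOn (by norm_num)).differentiableAt
        (isOpen_Ioo.mem_nhds hbmem)).hasDerivAt
    have hψmax : ∀ t ∈ Set.Icc (0:ℝ) T, r a t - ε * t ≤ r a b - ε * b := by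
      intro t ht
      have h1 := hmax a t ⟨⟨ha0, haX⟩, ht⟩
      linarith
    have htd : 0 ≤ deriv (fun s => r a s) b - ε := by
      apply aux_deriv_nonneg_of_isMaxOn (ψ := fun t => r a t - ε * t) hψmax hb_pos hbT
      have hlin : HasDerivAt (fun t : ℝ => ε * t) ε b := by
        simpa using (hasDerivAt_id b).const_mul ε
      exact hψd.sub hlin
    -- PDE at (a,b)
    have hp := hpde a (Set.mem_Ioi.mpr ha_pos) b hbmem
    rw [← hc2] at hp
    -- bounds and conclusion
    obtain ⟨hrab0, hrab1⟩ := hrbd a ha0 b ⟨hb0, hbt₀⟩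
    obtain ⟨hua0, hua1⟩ := hubd a ha0
    have hru : 0 < r a b - u a := by
      nlinarith [mul_nonneg hε.le hb0]
    have hfac : (lam/2) * ((r a b - 1)^2 - (u a - 1)^2)
        = (lam/2) * ((r a b - u a) * (r a b + u a - 2)) := by ring
    have hnp : (lam/2) * ((r a b - u a) * (r a b + u a - 2)) ≤ 0 := by
      apply mul_nonpos_of_nonneg_of_nonpos (by positivity)
      apply mul_nonpos_of_nonneg_of_nonpos hru.le
      linarith
    linarith [htd, hp, hg2, hode_a, hfac, hnp]
  -- conclude, extending to t = t₀ by continuity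
  intro x hx t ht
  rcases lt_or_eq_of_le ht.2 with h | h
  · exact key x hx t ⟨ht.1, h⟩
  · rw [h]
    have hmap : Continuous (fun s : ℝ => (x, s)) := continuous_const.prodMk continuous_id
    have hcont : ContinuousOn (fun t => r x t) (Set.Icc 0 t₀) := by
      have h2 := hrc.comp hmap.continuousOn
        (fun s hs => (Set.mk_mem_prod hx hs : (x, s) ∈ Set.Ici 0 ×ˢ Set.Icc 0 t₀))
      exact h2
    have hcw : ContinuousWithinAt (fun t => r x t) (Set.Ico 0 t₀) t₀ :=
      (hcont t₀ ⟨ht₀.le, le_refl _⟩).mono Set.Ico_subset_Icc_self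
    have hne : (𝓝[Set.Ico (0:ℝ) t₀] t₀).NeBot := by
      rw [← mem_closure_iff_nhdsWithin_neBot, closure_Ico (ne_of_lt ht₀)]
      exact ⟨ht₀.le, le_refl _⟩
    apply le_of_tendsto hcw
    filter_upwards [self_mem_nhdsWithin] with s hs
    exact key x hx s ⟨hs.1, hs.2⟩
end

section
/- Let λ > 0 and t₀ > 0. Suppose u : ℝ → ℝ is twice continuously differentiable on [0, ∞), satisfies (1/2)·u''(x) + (λ/2)·(u(x) − 1)² = 0 for all x ≥ 0, u(0) = 0, and 0 ≤ u(x) ≤ 1 for all x ≥ 0. Suppose s : [0, ∞) × [0, t₀] → ℝ is continuous, is twice continuously differentiable in x and once in t on the interior, satisfies the parabolic equation ∂s/∂t = (1/2)·∂²s/∂x² + (λ/2)·(s − 1)² there, satisfies 0 ≤ s(x, t) ≤ 1 for all (x, t), satisfies s(0, t) ≥ 0 for all t ∈ [0, t₀], satisfies s(x, 0) ≥ u(x) for all x ≥ 0, and satisfies sup_{t ∈ [0, t₀]} |u(x) − s(x, t)| → 0 as x → ∞. Then u(x) ≤ s(x, t) for all x ≥ 0 and t ∈ [0, t₀]. -/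
open Set Filter Topology

/-- One-sided derivative test: min from the left gives nonpositive derivative. -/
lemma aux_left_min_deriv_nonpos {g : ℝ → ℝ} {a c g' : ℝ} (hac : a < c)
    (hg : HasDerivAt g g' c) (hm : ∀ t ∈ Set.Ioo a c, g c ≤ g t) : g' ≤ 0 := by
  have h := hasDerivAt_iff_tendsto_slope.1 hg
  have h2 : Tendsto (slope g c) (𝓝[<] c) (𝓝 g') :=
    h.mono_left (nhdsWithin_mono _ fun x hx => ne_of_lt hx)
  refine le_of_tendsto h2 ?_
  filter_upwards [Ioo_mem_nhdsLT_of_mem ⟨hac, le_refl c⟩] with t ht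
  rw [slope_def_field]
  apply div_nonpos_of_nonneg_of_nonpos
  · linarith [hm t ht]
  · linarith [ht.2]

/-- Second derivative test at a local minimum. -/
lemma aux_second_deriv_nonneg {f : ℝ → ℝ} {a : ℝ} (hmin : IsLocalMin f a)
    (hf : ContDiffAt ℝ 2 f a) : 0 ≤ deriv (deriv f) a := by
  by_contra hneg
  push_neg at hneg
  obtain ⟨U, hU, hfU⟩ := hf.contDiffOn le_rfl (by simp)
  set V := interior U with hV
  have haV : a ∈ V := mem_interior_iff_mem_nhds.2 hU
  have hfV : ContDiffOn ℝ 2 f V := hfU.mono interior_subset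
  have hd1 : ContDiffOn ℝ 1 (deriv f) V :=
    hfV.deriv_of_isOpen isOpen_interior (by norm_num)
  have hdiff' : DifferentiableAt ℝ (deriv f) a :=
    (hd1.differentiableOn one_ne_zero).differentiableAt (isOpen_interior.mem_nhds haV)
  have hdf0 : deriv f a = 0 := hmin.deriv_eq_zero
  have hslope : Tendsto (slope (deriv f) a) (𝓝[≠] a) (𝓝 (deriv (deriv f) a)) :=
    hasDerivAt_iff_tendsto_slope.1 hdiff'.hasDerivAt
  have hev : ∀ᶠ x in 𝓝[>] a, deriv f x < 0 ∧ x ∈ V := by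
    have h1 : ∀ᶠ x in 𝓝[>] a, slope (deriv f) a x < 0 :=
      (hslope.eventually_lt_const hneg).filter_mono
        (nhdsWithin_mono _ fun x hx => ne_of_gt hx)
    have h2 : ∀ᶠ x in 𝓝[>] a, x ∈ V :=
      eventually_nhdsWithin_of_eventually_nhds (isOpen_interior.mem_nhds haV)
    filter_upwards [h1, h2, self_mem_nhdsWithin] with x hx1 hx2 hx3
    refine ⟨?_, hx2⟩
    rw [slope_def_field, hdf0, sub_zero] at hx1
    have hxa : 0 < x - a := sub_pos.2 hx3
    have := mul_neg_of_neg_of_pos hx1 hxa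
    rw [div_mul_cancel₀] at this
    · linarith
    · exact ne_of_gt hxa
  obtain ⟨b, hab, hsub⟩ := mem_nhdsGT_iff_exists_Ioo_subset.1 hev
  set c := (a + b) / 2 with hc
  have hab' : a < b := hab
  have hacb : c ∈ Ioo a b := ⟨by rw [hc]; linarith, by rw [hc]; linarith⟩
  have hIccV : Icc a c ⊆ V := by
    intro y hy
    rcases eq_or_lt_of_le hy.1 with h | h
    · exact h ▸ haV
    · exact (hsub ⟨h, lt_of_le_of_lt hy.2 hacb.2⟩).2
  have hanti : StrictAntiOn f (Icc a c) := by
    apply strictAntiOn_of_deriv_neg (convex_Icc a c)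
      ((hfV.continuousOn).mono hIccV)
    intro y hy
    rw [interior_Icc] at hy
    exact (hsub ⟨hy.1, lt_trans hy.2 hacb.2⟩).1
  have hex : ∃ x, f a ≤ f x ∧ x ∈ Ioo a c := by
    have h1 : ∀ᶠ x in 𝓝[>] a, f a ≤ f x :=
      hmin.filter_mono nhdsWithin_le_nhds
    have h2 : Ioo a c ∈ 𝓝[>] a := Ioo_mem_nhdsGT_of_mem ⟨le_refl a, hacb.1⟩
    exact (h1.and (eventually_of_mem h2 fun x hx => hx)).exists
  obtain ⟨x, hfx, hx⟩ := hex
  have := hanti (left_mem_Icc.2 (by linarith [hacb.1])) ⟨hx.1.le, hx.2.le⟩ hx.1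
  linarith

/-- Maximum-principle comparison: a stationary solution u is dominated by any
bounded solution s of the parabolic equation starting above it, nonnegative at
the spatial boundary, and agreeing with u at infinity uniformly in t. -/
theorem stmt_4 (lam t₀ : ℝ) (hlam : 0 < lam) (ht₀ : 0 < t₀)
    (u : ℝ → ℝ) (hureg : ContDiffOn ℝ 2 u (Set.Ici 0))
    (huode : ∀ x ≥ 0, (1 / 2) * iteratedDerivWithin 2 u (Set.Ici 0) x
      + (lam / 2) * (u x - 1) ^ 2 = 0)
    (hu0 : u 0 = 0)
    (hubd : ∀ x ≥ 0, 0 ≤ u x ∧ u x ≤ 1)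
    (s : ℝ → ℝ → ℝ)
    (hsc : ContinuousOn (fun p : ℝ × ℝ => s p.1 p.2) (Set.Ici 0 ×ˢ Set.Icc 0 t₀))
    (hsx : ∀ t ∈ Set.Ioo 0 t₀, ContDiffOn ℝ 2 (fun x => s x t) (Set.Ioi 0))
    (hst : ∀ x ∈ Set.Ioi (0 : ℝ), ContDiffOn ℝ 1 (fun t => s x t) (Set.Ioo 0 t₀))
    (hpde : ∀ x ∈ Set.Ioi (0 : ℝ), ∀ t ∈ Set.Ioo 0 t₀,
      deriv (fun τ => s x τ) t
        = (1 / 2) * deriv (deriv fun y => s y t) x + (lam / 2) * (s x t - 1) ^ 2)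
    (hsbd : ∀ x ≥ 0, ∀ t ∈ Set.Icc 0 t₀, 0 ≤ s x t ∧ s x t ≤ 1)
    (hs0 : ∀ t ∈ Set.Icc 0 t₀, 0 ≤ s 0 t)
    (hinit : ∀ x ≥ 0, u x ≤ s x 0)
    (hinf : Filter.Tendsto (fun x => ⨆ t : Set.Icc 0 t₀, |u x - s x t|)
      Filter.atTop (nhds 0)) :
    ∀ x ≥ 0, ∀ t ∈ Set.Icc 0 t₀, u x ≤ s x t := by
  -- Second derivative of u at interior points.
  have huder : ∀ x : ℝ, 0 < x → deriv (deriv u) x = -lam * (u x - 1) ^ 2 := by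
    intro x hx
    have hud : UniqueDiffWithinAt ℝ (Set.Ici (0:ℝ)) x := (uniqueDiffOn_Ici 0) x hx.le
    have e1 : iteratedDerivWithin 2 u (Set.Ici 0) x = deriv (deriv u) x := by
      rw [show (2:ℕ) = 1 + 1 from rfl, iteratedDerivWithin_succ,
        derivWithin_of_mem_nhds (Ici_mem_nhds hx)]
      apply Filter.EventuallyEq.deriv_eq
      filter_upwards [Ioi_mem_nhds hx] with y hy
      rw [iteratedDerivWithin_one,
        derivWithin_of_mem_nhds (Ici_mem_nhds hy)]
    have h := huode x hx.le
    rw [e1] at h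
    linarith
  -- Key rectangle maximum-principle estimate.
  have key : ∀ R, 0 < R → ∀ t₁ ∈ Set.Ioo 0 t₀, ∀ ε, 0 < ε → ∀ δ, 0 ≤ δ →
      (∀ t ∈ Set.Icc 0 t₀, u R - s R t ≤ δ) →
      ∀ x ∈ Set.Icc 0 R, ∀ t ∈ Set.Icc 0 t₁, u x - s x t ≤ δ + ε * t₀ := by
    intro R hR t₁ ht₁ ε hε δ hδ hRbd
    have hvc : ContinuousOn (fun p : ℝ × ℝ => s p.1 p.2 - u p.1 + ε * p.2)
        (Set.Icc 0 R ×ˢ Set.Icc 0 t₁) := by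
      have hKsub : (Set.Icc 0 R ×ˢ Set.Icc 0 t₁ : Set (ℝ × ℝ))
          ⊆ Set.Ici 0 ×ˢ Set.Icc 0 t₀ := by
        rintro ⟨x, t⟩ ⟨hx, ht⟩
        exact ⟨hx.1, ht.1, le_trans ht.2 ht₁.2.le⟩
      refine ContinuousOn.add (ContinuousOn.sub (hsc.mono hKsub) ?_) ?_
      · exact hureg.continuousOn.comp continuous_fst.continuousOn (fun p hp => hp.1.1)
      · exact (continuous_const.mul continuous_snd).continuousOn
    obtain ⟨p, hpK, hpmin⟩ := (isCompact_Icc.prod isCompact_Icc).exists_isMinOn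
      ⟨(0,0), ⟨⟨le_refl 0, hR.le⟩, ⟨le_refl 0, ht₁.1.le⟩⟩⟩ hvc
    obtain ⟨x', t'⟩ := p
    obtain ⟨⟨hx0, hxR⟩, ht0, htt₁⟩ := hpK
    dsimp only at hx0 hxR ht0 htt₁
    -- the minimum value is at least -δ
    have hmain : -δ ≤ s x' t' - u x' + ε * t' := by
      by_contra hcon
      push_neg at hcon
      have ht'pos : 0 < t' := by
        rcases eq_or_lt_of_le ht0 with h | h
        · exfalso
          have h1 := hinit x' hx0
          rw [← h] at hcon
          simp only [mul_zero] at hcon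
          linarith
        · exact h
      have hx'pos : 0 < x' := by
        rcases eq_or_lt_of_le hx0 with h | h
        · exfalso
          have h1 := hs0 t' ⟨ht0, le_trans htt₁ ht₁.2.le⟩
          rw [← h] at hcon
          rw [hu0] at hcon
          nlinarith [mul_pos hε ht'pos]
        · exact h
      have hx'R : x' < R := by
        rcases eq_or_lt_of_le hxR with h | h
        · exfalso
          have h1 := hRbd t' ⟨ht0, le_trans htt₁ ht₁.2.le⟩
          rw [h] at hcon
          nlinarith [mul_pos hε ht'pos]
        · exact h
      have ht'mem : t' ∈ Set.Ioo 0 t₀ := ⟨ht'pos, lt_of_le_of_lt htt₁ ht₁.2⟩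
      have hx'Ioi : x' ∈ Set.Ioi (0:ℝ) := hx'pos
      -- time direction: derivative nonpositive at the minimum
      have hgt : deriv (fun τ => s x' τ) t' + ε ≤ 0 := by
        have hd : DifferentiableAt ℝ (fun τ => s x' τ) t' :=
          ((hst x' hx'Ioi).contDiffAt (isOpen_Ioo.mem_nhds ht'mem)).differentiableAt one_ne_zero
        have hg : HasDerivAt (fun t => s x' t - u x' + ε * t)
            (deriv (fun τ => s x' τ) t' + ε) t' := by
          have h1 := (hd.hasDerivAt.sub_const (u x')).fun_add ((hasDerivAt_id t').const_mul ε)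
          simpa using h1
        apply aux_left_min_deriv_nonpos ht'pos hg
        intro t htm
        exact isMinOn_iff.1 hpmin (x', t) ⟨⟨hx0, hxR⟩, ⟨htm.1.le, le_trans htm.2.le htt₁⟩⟩
      -- space direction: second derivative nonnegative at the minimum
      have hStCA : ContDiffAt ℝ 2 (fun y => s y t') x' :=
        (hsx t' ht'mem).contDiffAt (isOpen_Ioi.mem_nhds hx'Ioi)
      have huCA : ContDiffAt ℝ 2 u x' := hureg.contDiffAt (Ici_mem_nhds hx'pos)
      have hflocmin : IsLocalMin (fun y => s y t' - u y + ε * t') x' := by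
        filter_upwards [Icc_mem_nhds hx'pos hx'R] with y hy
        exact isMinOn_iff.1 hpmin (y, t') ⟨hy, ⟨ht0, htt₁⟩⟩
      have hsecond : 0 ≤ deriv (deriv (fun y => s y t' - u y + ε * t')) x' :=
        aux_second_deriv_nonneg hflocmin ((hStCA.sub huCA).add contDiffAt_const)
      have hd1S : ContDiffOn ℝ 1 (deriv (fun y => s y t')) (Set.Ioi 0) :=
        (hsx t' ht'mem).deriv_of_isOpen isOpen_Ioi (by norm_num)
      have hd1u : ContDiffOn ℝ 1 (deriv u) (Set.Ioi 0) :=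
        (hureg.mono Set.Ioi_subset_Ici_self).deriv_of_isOpen isOpen_Ioi (by norm_num)
      have hdSd : DifferentiableAt ℝ (deriv (fun y => s y t')) x' :=
        (hd1S.differentiableOn one_ne_zero).differentiableAt (isOpen_Ioi.mem_nhds hx'Ioi)
      have hdud : DifferentiableAt ℝ (deriv u) x' :=
        (hd1u.differentiableOn one_ne_zero).differentiableAt (isOpen_Ioi.mem_nhds hx'Ioi)
      have hdd : deriv (deriv (fun y => s y t' - u y + ε * t')) x'
          = deriv (deriv (fun y => s y t')) x' - deriv (deriv u) x' := by
        have hev : deriv (fun y => s y t' - u y + ε * t')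
            =ᶠ[𝓝 x'] fun y => deriv (fun z => s z t') y - deriv u y := by
          filter_upwards [Ioi_mem_nhds hx'pos] with y hy
          have h1 : DifferentiableAt ℝ (fun z => s z t') y :=
            ((hsx t' ht'mem).contDiffAt (isOpen_Ioi.mem_nhds hy)).differentiableAt
              (by norm_num)
          have h2 : DifferentiableAt ℝ u y :=
            (hureg.contDiffAt (Ici_mem_nhds hy)).differentiableAt (by norm_num)
          show deriv (fun y => s y t' - u y + ε * t') y = _
          rw [deriv_add_const, deriv_fun_sub h1 h2]
        rw [hev.deriv_eq, deriv_fun_sub hdSd hdud]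
      -- combine with the PDE and the ODE
      have hpde' := hpde x' hx'Ioi t' ht'mem
      have hu'' := huder x' hx'pos
      have hsle := (hsbd x' hx0 t' ⟨ht0, ht'mem.2.le⟩).2
      have hule := (hubd x' hx0).2
      rw [hdd, hu''] at hsecond
      have h1 : 0 < u x' - s x' t' := by nlinarith [mul_pos hε ht'pos]
      have h2 : 0 ≤ 2 - s x' t' - u x' := by linarith
      have h3 : 0 ≤ (u x' - s x' t') * (2 - s x' t' - u x') := mul_nonneg h1.le h2
      have h4 : 0 ≤ (s x' t' - 1) ^ 2 - (u x' - 1) ^ 2 := by nlinarith [h3]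
      have h5 : 0 ≤ lam / 2 * (s x' t' - 1) ^ 2 - lam / 2 * (u x' - 1) ^ 2 := by
        nlinarith [mul_nonneg (by linarith : (0:ℝ) ≤ lam / 2) h4]
      have h6 : 0 ≤ deriv (fun τ => s x' τ) t' := by linarith
      linarith
    -- conclude the rectangle estimate
    intro x hxm t htm
    have h1 := isMinOn_iff.1 hpmin (x, t) ⟨hxm, htm⟩
    have hεt : ε * t ≤ ε * t₀ :=
      mul_le_mul_of_nonneg_left (le_trans htm.2 ht₁.2.le) hε.le
    simp only at h1
    linarith
  -- Assemble: first for t < t₀.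
  intro x hx t ht
  have H : ∀ t' ∈ Set.Ico 0 t₀, u x ≤ s x t' := by
    intro t' ht'
    have hall : ∀ c, 0 < c → u x - s x t' ≤ c := by
      intro c hc
      obtain ⟨R, hR1, hR2⟩ :=
        ((eventually_ge_atTop (max x 1)).and
          (hinf.eventually_lt_const (by linarith : (0:ℝ) < c / 2))).exists
      have hRpos : (0:ℝ) < R := lt_of_lt_of_le (by norm_num) ((le_max_right x 1).trans hR1)
      have hxR : x ≤ R := (le_max_left x 1).trans hR1
      have hbdd : BddAbove (Set.range fun t : Set.Icc (0:ℝ) t₀ => |u R - s R t|) := by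
        refine ⟨2, ?_⟩
        rintro _ ⟨τ, rfl⟩
        have h1 := hubd R hRpos.le
        have h2 := hsbd R hRpos.le τ τ.2
        rw [abs_le]
        constructor <;> linarith
      have hne : Nonempty (Set.Icc (0:ℝ) t₀) := ⟨⟨0, le_refl 0, ht₀.le⟩⟩
      have hδbound : ∀ τ ∈ Set.Icc 0 t₀, u R - s R τ
          ≤ ⨆ t : Set.Icc 0 t₀, |u R - s R t| := fun τ hτ =>
        le_trans (le_abs_self _) (le_ciSup hbdd ⟨τ, hτ⟩)
      have hδ0 : 0 ≤ ⨆ t : Set.Icc 0 t₀, |u R - s R t| :=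
        le_trans (abs_nonneg _) (le_ciSup hbdd ⟨0, le_refl 0, ht₀.le⟩)
      have ht₁mem : (t' + t₀) / 2 ∈ Set.Ioo 0 t₀ :=
        ⟨by linarith [ht'.1], by linarith [ht'.2]⟩
      have hεpos : 0 < c / (2 * t₀) := div_pos hc (by linarith)
      have hkey := key R hRpos ((t' + t₀) / 2) ht₁mem (c / (2 * t₀)) hεpos
        (⨆ t : Set.Icc 0 t₀, |u R - s R t|) hδ0 hδbound x ⟨hx, hxR⟩ t'
        ⟨ht'.1, by linarith [ht'.2]⟩
      have hεt₀ : c / (2 * t₀) * t₀ = c / 2 := by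
        field_simp
      rw [hεt₀] at hkey
      linarith
    by_contra hcon
    push_neg at hcon
    have := hall ((u x - s x t') / 2) (by linarith)
    linarith
  rcases eq_or_lt_of_le ht.2 with heq | hlt
  · -- t = t₀ : pass to the limit using continuity
    subst heq
    have hcw : ContinuousWithinAt (fun τ => s x τ) (Set.Icc 0 t) t := by
      have := hsc.comp (f := fun τ : ℝ => ((x : ℝ), τ))
        (continuous_const.prodMk continuous_id).continuousOn
        (fun τ hτ => Set.mk_mem_prod hx hτ)
      exact this t (Set.right_mem_Icc.2 ht.1)
    have hne : (𝓝[Set.Ioo 0 t] t).NeBot := by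
      refine mem_closure_iff_nhdsWithin_neBot.1 ?_
      rw [closure_Ioo (by rcases ht with ⟨h1, _⟩; linarith [ht₀] : (0:ℝ) ≠ t)]
      exact ⟨ht.1, le_refl t⟩
    have htend : Tendsto (fun τ => s x τ) (𝓝[Set.Ioo 0 t] t) (𝓝 (s x t)) :=
      (hcw.mono Set.Ioo_subset_Icc_self).tendsto
    refine ge_of_tendsto htend ?_
    filter_upwards [self_mem_nhdsWithin] with τ hτ
    exact H τ ⟨hτ.1.le, lt_of_lt_of_le hτ.2 ht.2⟩
  · exact H t ⟨ht.1, hlt⟩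
end

section
/- Let λ > 0. If u : ℝ → ℝ is twice continuously differentiable on [0, ∞), satisfies (1/2)·u''(x) + (λ/2)·(u(x) − 1)² = 0 for all x ≥ 0, u(0) = 0, and u(x) ≥ 0 for all x ≥ 0, then for all x ≥ 0 one has u(x) ≥ 1 − 1/(√(λ/6)·x + 1)². -/
open Set

private lemma aux_v' {c x : ℝ} (hP : 0 < c * x + 1) :
    HasDerivAt (fun y => 1 - 1 / (c * y + 1) ^ 2) (2 * c / (c * x + 1) ^ 3) x := by
  have hP' : c * x + 1 ≠ 0 := ne_of_gt hP
  have h1 : HasDerivAt (fun y : ℝ => c * y + 1) c x := by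
    simpa using ((hasDerivAt_id x).const_mul c).add_const 1
  have h2 : HasDerivAt (fun y : ℝ => (c * y + 1) ^ 2) ((2:ℕ) * (c * x + 1) ^ 1 * c) x :=
    h1.pow 2
  have h3 := (h2.inv (pow_ne_zero 2 hP')).const_sub 1
  have heq : (fun y : ℝ => 1 - ((c * y + 1) ^ 2)⁻¹) = fun y => 1 - 1 / (c * y + 1) ^ 2 := by
    funext y; rw [one_div]
  simp only [Pi.inv_apply] at h3
  rw [heq] at h3
  refine h3.congr_deriv ?_
  field_simp; ring

private lemma aux_v'' {c x : ℝ} (hP : 0 < c * x + 1) :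
    HasDerivAt (fun y => 2 * c / (c * y + 1) ^ 3) (-(6 * c ^ 2) / (c * x + 1) ^ 4) x := by
  have hP' : c * x + 1 ≠ 0 := ne_of_gt hP
  have h1 : HasDerivAt (fun y : ℝ => c * y + 1) c x := by
    simpa using ((hasDerivAt_id x).const_mul c).add_const 1
  have h2 : HasDerivAt (fun y : ℝ => (c * y + 1) ^ 3) ((3:ℕ) * (c * x + 1) ^ 2 * c) x :=
    h1.pow 3
  have h3 := (h2.inv (pow_ne_zero 3 hP')).const_mul (2 * c)
  have heq : (fun y : ℝ => 2 * c * ((c * y + 1) ^ 3)⁻¹) = fun y => 2 * c / (c * y + 1) ^ 3 := by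
    funext y; rw [div_eq_mul_inv]
  simp only [Pi.inv_apply] at h3
  rw [heq] at h3
  refine h3.congr_deriv ?_
  field_simp; ring

private lemma aux_u' {u : ℝ → ℝ} (hreg : ContDiffOn ℝ 2 u (Set.Ici 0)) {x : ℝ} (hx : 0 < x) :
    HasDerivAt u (derivWithin u (Set.Ici 0) x) x := by
  have hd : DifferentiableAt ℝ u x :=
    ((hreg.differentiableOn (by norm_num)) x (le_of_lt hx)).differentiableAt (Ici_mem_nhds hx)
  rw [derivWithin_of_mem_nhds (Ici_mem_nhds hx)]
  exact hd.hasDerivAt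

private lemma aux_u'' {u : ℝ → ℝ} (hreg : ContDiffOn ℝ 2 u (Set.Ici 0)) {x : ℝ} (hx : 0 < x) :
    HasDerivAt (derivWithin u (Set.Ici 0)) (iteratedDerivWithin 2 u (Set.Ici 0) x) x := by
  have huds : UniqueDiffOn ℝ (Set.Ici (0:ℝ)) := uniqueDiffOn_Ici 0
  have hg : ContDiffOn ℝ 1 (derivWithin u (Set.Ici 0)) (Set.Ici 0) :=
    hreg.derivWithin huds (by norm_num)
  have hd : DifferentiableAt ℝ (derivWithin u (Set.Ici 0)) x :=
    ((hg.differentiableOn (by norm_num)) x (le_of_lt hx)).differentiableAt (Ici_mem_nhds hx)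
  have heq : iteratedDerivWithin 2 u (Set.Ici 0) x = deriv (derivWithin u (Set.Ici 0)) x := by
    rw [show (2:ℕ) = 1 + 1 from rfl, iteratedDerivWithin_succ]
    rw [← derivWithin_of_mem_nhds (Ici_mem_nhds hx)]
    exact derivWithin_congr (fun y hy => congrFun iteratedDerivWithin_one y)
      (congrFun iteratedDerivWithin_one x)
  rw [heq]
  exact hd.hasDerivAt

/-- key concavity lemma -/
private lemma aux_concave (lam : ℝ) (hlam : 0 < lam) (u : ℝ → ℝ)
    (hreg : ContDiffOn ℝ 2 u (Set.Ici 0))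
    (hode : ∀ x ≥ 0, (1 / 2) * iteratedDerivWithin 2 u (Set.Ici 0) x
      + (lam / 2) * (u x - 1) ^ 2 = 0)
    {c a b : ℝ} (hcnn : 0 ≤ c) (hc2 : c ^ 2 = lam / 6) (ha : 0 ≤ a) (hab : a < b)
    (hneg : ∀ x ∈ Set.Ioo a b, u x < 1 - 1 / (c * x + 1) ^ 2) :
    ConcaveOn ℝ (Set.Icc a b) (fun x => u x - (1 - 1 / (c * x + 1) ^ 2)) := by
  have hcP : ∀ x : ℝ, 0 ≤ x → 0 < c * x + 1 := by
    intro x hx; nlinarith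
  have hode' : ∀ x : ℝ, 0 ≤ x →
      iteratedDerivWithin 2 u (Set.Ici 0) x = -lam * (u x - 1) ^ 2 := by
    intro x hx
    have := hode x hx
    linarith
  refine concaveOn_of_hasDerivWithinAt2_nonpos
    (f' := fun x => derivWithin u (Set.Ici 0) x - 2 * c / (c * x + 1) ^ 3)
    (f'' := fun x => iteratedDerivWithin 2 u (Set.Ici 0) x + 6 * c ^ 2 / (c * x + 1) ^ 4)
    (convex_Icc a b) ?_ ?_ ?_ ?_
  · -- continuity
    have h1 : ContinuousOn u (Set.Icc a b) :=
      hreg.continuousOn.mono (Set.Icc_subset_Ici_self.trans (Set.Ici_subset_Ici.mpr ha))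
    have h2 : ContinuousOn (fun x => 1 - 1 / (c * x + 1) ^ 2) (Set.Icc a b) := by
      intro x hx
      exact (aux_v' (hcP x (le_trans ha hx.1))).continuousAt.continuousWithinAt
    exact h1.sub h2
  · intro x hx
    rw [interior_Icc] at hx
    have hx0 : 0 < x := lt_of_le_of_lt ha hx.1
    exact ((aux_u' hreg hx0).sub (aux_v' (hcP x hx0.le))).hasDerivWithinAt
  · intro x hx
    rw [interior_Icc] at hx
    have hx0 : 0 < x := lt_of_le_of_lt ha hx.1
    have h := (aux_u'' hreg hx0).sub (aux_v'' (hcP x hx0.le))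
    have : iteratedDerivWithin 2 u (Set.Ici 0) x - -(6 * c ^ 2) / (c * x + 1) ^ 4
        = iteratedDerivWithin 2 u (Set.Ici 0) x + 6 * c ^ 2 / (c * x + 1) ^ 4 := by ring
    rw [this] at h
    exact h.hasDerivWithinAt
  · intro x hx
    rw [interior_Icc] at hx
    have hx0 : 0 < x := lt_of_le_of_lt ha hx.1
    have hP := hcP x hx0.le
    have hP4 : (0:ℝ) < (c * x + 1) ^ 4 := by positivity
    have hP2 : (0:ℝ) < (c * x + 1) ^ 2 := by positivity
    have hu := hneg x hx
    show iteratedDerivWithin 2 u (Set.Ici 0) x + 6 * c ^ 2 / (c * x + 1) ^ 4 ≤ 0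
    rw [hode' x hx0.le]
    -- need : -lam*(u x-1)^2 + 6*c^2/(c*x+1)^4 ≤ 0
    rw [hc2]
    have h6 : 6 * (lam / 6) = lam := by ring
    have hkey : 1 / (c * x + 1) ^ 2 ≤ 1 - u x := by linarith
    have hq : 0 < 1 / (c * x + 1) ^ 2 := by positivity
    have hsq : (1 / (c * x + 1) ^ 2) ^ 2 ≤ (1 - u x) ^ 2 := by nlinarith
    have hrw : (1 / (c * x + 1) ^ 2) ^ 2 = 1 / (c * x + 1) ^ 4 := by
      field_simp
    rw [hrw] at hsq
    have : 6 * (lam / 6) / (c * x + 1) ^ 4 = lam * (1 / (c * x + 1) ^ 4) := by ring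
    rw [this]
    nlinarith

/-- The explicit solution 1 − 1/(√(λ/6)·x + 1)² is the least nonnegative
solution: any nonnegative C² solution of the stationary equation with u(0) = 0
dominates it. -/
theorem stmt_5 (lam : ℝ) (hlam : 0 < lam) (u : ℝ → ℝ)
    (hreg : ContDiffOn ℝ 2 u (Set.Ici 0))
    (hode : ∀ x ≥ 0, (1 / 2) * iteratedDerivWithin 2 u (Set.Ici 0) x
      + (lam / 2) * (u x - 1) ^ 2 = 0)
    (h0 : u 0 = 0)
    (hnn : ∀ x ≥ 0, 0 ≤ u x) :
    ∀ x ≥ 0, 1 - 1 / (Real.sqrt (lam / 6) * x + 1) ^ 2 ≤ u x := by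
  set c : ℝ := Real.sqrt (lam / 6) with hcdef
  have hcnn : 0 ≤ c := Real.sqrt_nonneg _
  have hc2 : c ^ 2 = lam / 6 := Real.sq_sqrt (by linarith)
  have hcP : ∀ x : ℝ, 0 ≤ x → 0 < c * x + 1 := by intro x hx; nlinarith
  set v : ℝ → ℝ := fun x => 1 - 1 / (c * x + 1) ^ 2 with hvdef
  set w : ℝ → ℝ := fun x => u x - v x with hwdef
  have hvlt1 : ∀ x : ℝ, 0 ≤ x → v x < 1 := by
    intro x hx
    have hP := hcP x hx
    have : 0 < 1 / (c * x + 1) ^ 2 := by positivity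
    simp only [hvdef]; linarith
  have hwge : ∀ x : ℝ, 0 ≤ x → -1 < w x := by
    intro x hx
    have h1 := hnn x hx
    have h2 := hvlt1 x hx
    simp only [hwdef]; linarith
  have hv0 : v 0 = 0 := by simp [hvdef]
  have hw0 : w 0 = 0 := by simp [hwdef, hv0, h0]
  have hwcont : ContinuousOn w (Set.Ici 0) := by
    have h1 : ContinuousOn v (Set.Ici 0) := fun x hx =>
      (aux_v' (hcP x hx)).continuousAt.continuousWithinAt
    exact hreg.continuousOn.sub h1
  by_contra hcon
  push_neg at hcon
  obtain ⟨x₀, hx₀0, hx₀⟩ := hcon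
  have hwx₀ : w x₀ < 0 := by simp only [hwdef, hvdef]; linarith
  have hx₀pos : 0 < x₀ := by
    rcases eq_or_lt_of_le hx₀0 with h | h
    · exfalso; rw [← h, hw0] at hwx₀; linarith
    · exact h
  -- the last zero of w before x₀
  set Z : Set ℝ := Set.Icc 0 x₀ ∩ w ⁻¹' {0} with hZdef
  have hZclosed : IsClosed Z :=
    (hwcont.mono (Set.Icc_subset_Ici_self)).preimage_isClosed_of_isClosed
      isClosed_Icc isClosed_singleton
  have hZcomp : IsCompact Z :=
    isCompact_Icc.of_isClosed_subset hZclosed Set.inter_subset_left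
  have hZne : Z.Nonempty := ⟨0, ⟨le_refl 0, hx₀0⟩, hw0⟩
  obtain ⟨a, hadef⟩ : ∃ a : ℝ, a = sSup Z := ⟨_, rfl⟩
  have haZ : a ∈ Z := hadef ▸ hZcomp.sSup_mem hZne
  have ha0 : 0 ≤ a := haZ.1.1
  have hax₀ : a ≤ x₀ := haZ.1.2
  have hwa : w a = 0 := haZ.2
  have halt : a < x₀ := by
    rcases eq_or_lt_of_le hax₀ with h | h
    · exfalso; rw [h] at hwa; exact hwx₀.ne hwa
    · exact h
  have hbdd : BddAbove Z := hZcomp.bddAbove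
  -- w < 0 on (a, x₀]
  have hbelow : ∀ x : ℝ, a < x → x ≤ x₀ → w x < 0 := by
    intro x hax hxx₀
    by_contra h
    push_neg at h
    rcases eq_or_lt_of_le h with h' | h'
    · have hmem : x ∈ Z := ⟨⟨le_trans ha0 hax.le, hxx₀⟩, h'.symm⟩
      have := hadef ▸ le_csSup hbdd hmem
      linarith
    · have hcont' : ContinuousOn w (Set.Icc x x₀) :=
        hwcont.mono (Set.Icc_subset_Ici_self.trans (Set.Ici_subset_Ici.mpr (le_trans ha0 hax.le)))
      obtain ⟨y, hy, hwy⟩ := intermediate_value_Icc' hxx₀ hcont' ⟨hwx₀.le, h'.le⟩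
      have hmem : y ∈ Z := ⟨⟨le_trans ha0 (le_trans hax.le hy.1), hy.2⟩, hwy⟩
      have hya := hadef ▸ le_csSup hbdd hmem
      have : a < y := lt_of_lt_of_le hax hy.1
      linarith
  -- generic chord lemma for concavity on [a, b] with w a = 0
  have hchord : ∀ b : ℝ, x₀ < b → ConcaveOn ℝ (Set.Icc a b) w →
      (x₀ - a) / (b - a) * w b ≤ w x₀ := by
    intro b hb hconc
    have hba : (0:ℝ) < b - a := by linarith
    have hba' : b - a ≠ 0 := ne_of_gt hba
    have ht : (0:ℝ) ≤ (b - x₀) / (b - a) := by apply div_nonneg <;> linarith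
    have hs : (0:ℝ) ≤ (x₀ - a) / (b - a) := by apply div_nonneg <;> linarith
    have hts : (b - x₀) / (b - a) + (x₀ - a) / (b - a) = 1 := by
      rw [← add_div, show b - x₀ + (x₀ - a) = b - a by ring, div_self hba']
    have hcomb := hconc.2 (Set.left_mem_Icc.mpr (by linarith))
      (Set.right_mem_Icc.mpr (by linarith)) ht hs hts
    simp only [smul_eq_mul] at hcomb
    have hpt : (b - x₀) / (b - a) * a + (x₀ - a) / (b - a) * b = x₀ := by
      field_simp
      ring
    rw [hpt, hwa] at hcomb
    linarith
  -- w < 0 on (a, ∞)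
  have hnegall : ∀ x : ℝ, a < x → w x < 0 := by
    intro x hax
    rcases le_or_gt x x₀ with h | h
    · exact hbelow x hax h
    · by_contra h0
      push_neg at h0
      set Z2 : Set ℝ := Set.Icc x₀ x ∩ w ⁻¹' {0} with hZ2def
      have hZ2closed : IsClosed Z2 :=
        (hwcont.mono (Set.Icc_subset_Ici_self.trans
          (Set.Ici_subset_Ici.mpr hx₀0))).preimage_isClosed_of_isClosed
          isClosed_Icc isClosed_singleton
      have hZ2comp : IsCompact Z2 :=
        isCompact_Icc.of_isClosed_subset hZ2closed Set.inter_subset_left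
      have hcont' : ContinuousOn w (Set.Icc x₀ x) :=
        hwcont.mono (Set.Icc_subset_Ici_self.trans (Set.Ici_subset_Ici.mpr hx₀0))
      have hZ2ne : Z2.Nonempty := by
        obtain ⟨y, hy, hwy⟩ := intermediate_value_Icc h.le hcont' ⟨hwx₀.le, h0⟩
        exact ⟨y, hy, hwy⟩
      obtain ⟨b', hb'def⟩ : ∃ b' : ℝ, b' = sInf Z2 := ⟨_, rfl⟩
      have hb'Z2 : b' ∈ Z2 := hb'def ▸ hZ2comp.sInf_mem hZ2ne
      have hwb' : w b' = 0 := hb'Z2.2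
      have hx₀b' : x₀ < b' := by
        rcases eq_or_lt_of_le hb'Z2.1.1 with hh | hh
        · exfalso; rw [← hh] at hwb'; exact hwx₀.ne hwb'
        · exact hh
      have hbddb : BddBelow Z2 := hZ2comp.bddBelow
      have hmid : ∀ y ∈ Set.Ioo a b', w y < 0 := by
        intro y hy
        rcases le_or_gt y x₀ with hc1 | hc1
        · exact hbelow y hy.1 hc1
        · by_contra hy0
          push_neg at hy0
          rcases eq_or_lt_of_le hy0 with h' | h'
          · have hmem : y ∈ Z2 := ⟨⟨hc1.le, le_trans hy.2.le hb'Z2.1.2⟩, h'.symm⟩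
            have := hb'def ▸ csInf_le hbddb hmem
            linarith [hy.2]
          · have hcont'' : ContinuousOn w (Set.Icc x₀ y) :=
              hwcont.mono (Set.Icc_subset_Ici_self.trans (Set.Ici_subset_Ici.mpr hx₀0))
            obtain ⟨z, hz, hwz⟩ := intermediate_value_Icc hc1.le hcont'' ⟨hwx₀.le, h'.le⟩
            have hmem : z ∈ Z2 := ⟨⟨hz.1, le_trans hz.2 (le_trans hy.2.le hb'Z2.1.2)⟩, hwz⟩
            have h1 := hb'def ▸ csInf_le hbddb hmem
            have h2 : z ≤ y := hz.2
            linarith [hy.2]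
      have hconc : ConcaveOn ℝ (Set.Icc a b') w :=
        aux_concave lam hlam u hreg hode hcnn hc2 ha0 (lt_trans halt hx₀b')
          (fun y hy => by have := hmid y hy; simp only [hwdef, hvdef] at this ⊢; linarith)
      have := hchord b' hx₀b' hconc
      rw [hwb'] at this
      simp at this
      linarith
  -- final contradiction via unboundedness of the chord
  obtain ⟨r, hr⟩ : ∃ r : ℝ, r = -(w x₀) := ⟨_, rfl⟩
  have hr0 : 0 < r := by rw [hr]; linarith
  have hr1 : r < 1 := by
    have := hwge x₀ hx₀0
    rw [hr]; linarith
  have hrat : 1 < 2 / r := by rw [lt_div_iff₀ hr0]; linarith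
  obtain ⟨B, hB⟩ : ∃ B : ℝ, B = a + (x₀ - a) * (2 / r) := ⟨_, rfl⟩
  have hBgt : x₀ < B := by
    have h1 : (x₀ - a) * 1 < (x₀ - a) * (2 / r) :=
      mul_lt_mul_of_pos_left hrat (by linarith)
    rw [hB]; linarith
  have hconc : ConcaveOn ℝ (Set.Icc a B) w :=
    aux_concave lam hlam u hreg hode hcnn hc2 ha0 (by linarith : a < B)
      (fun y hy => by have := hnegall y hy.1; simp only [hwdef, hvdef] at this ⊢; linarith)
  have hcomb := hchord B hBgt hconc
  have hBa : B - a = (x₀ - a) * (2 / r) := by rw [hB]; ring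
  have hxa0 : (0:ℝ) < x₀ - a := by linarith
  have hsval : (x₀ - a) / (B - a) = r / 2 := by
    rw [hBa]
    rw [div_eq_div_iff (by positivity) (by norm_num : (2:ℝ) ≠ 0)]
    field_simp
  rw [hsval] at hcomb
  -- hcomb : r / 2 * w B ≤ w x₀ = -r, with w B > -1 and 0 < r
  have hwBge : -1 < w B := hwge B (by linarith)
  have hwx₀eq : w x₀ = -r := by rw [hr]; ring
  rw [hwx₀eq] at hcomb
  have hh := mul_lt_mul_of_pos_left hwBge (by linarith : (0:ℝ) < r / 2)
  linarith
end

section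
/- Let λ > 0 and let G be a polynomial with non-negative real coefficients such that G(1) = 1 (the coefficients sum to 1) and G'(1) ≤ 1 (the critical or sub-critical case). If u₁, u₂ : ℝ → ℝ are both twice continuously differentiable on [0, ∞), both satisfy (1/2)·u''(x) + λ·(G(u(x)) − u(x)) = 0 for all x ≥ 0, both satisfy u(0) = 0, and both satisfy 0 ≤ u(x) ≤ 1 for all x ≥ 0, then u₁(x) = u₂(x) for all x ≥ 0. -/
open Set Filter

/-- A polynomial with nonnegative coefficients is monotone on `[0, ∞)`. -/
lemma stmt6_poly_mono (P : Polynomial ℝ) (h : ∀ n, 0 ≤ P.coeff n) {s t : ℝ}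
    (hs : 0 ≤ s) (hst : s ≤ t) : P.eval s ≤ P.eval t := by
  rw [Polynomial.eval_eq_sum_range (p := P) s, Polynomial.eval_eq_sum_range (p := P) t]
  exact Finset.sum_le_sum fun i _ =>
    mul_le_mul_of_nonneg_left (pow_le_pow_left₀ hs hst i) (h i)

/-- Lipschitz bound on `[0,1]` for a polynomial with nonnegative coefficients whose
derivative at 1 is at most 1. -/
lemma stmt6_lip (G : Polynomial ℝ) (hGnn : ∀ n, 0 ≤ G.coeff n)
    (hG'1 : G.derivative.eval 1 ≤ 1) {s t : ℝ} (hs : 0 ≤ s) (hst : s ≤ t) (ht : t ≤ 1) :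
    G.eval t - G.eval s ≤ t - s := by
  rcases eq_or_lt_of_le hst with rfl | h
  · simp
  · have hder : ∀ n, 0 ≤ G.derivative.coeff n := by
      intro n
      rw [Polynomial.coeff_derivative]
      have := hGnn (n + 1)
      positivity
    obtain ⟨c, hc, hceq⟩ := exists_hasDerivAt_eq_slope (fun x => G.eval x)
      (fun x => G.derivative.eval x) h (G.continuous_aeval.continuousOn)
      (fun x _ => G.hasDerivAt x)
    have hc1 : G.derivative.eval c ≤ 1 :=
      le_trans (stmt6_poly_mono G.derivative hder (le_trans hs hc.1.le)
        (le_trans hc.2.le ht)) hG'1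
    rw [hceq] at hc1
    have hts : 0 < t - s := by linarith
    calc G.eval t - G.eval s = (G.eval t - G.eval s) / (t - s) * (t - s) := by
          field_simp
      _ ≤ 1 * (t - s) := mul_le_mul_of_nonneg_right hc1 hts.le
      _ = t - s := one_mul _

/-- Derivative facts for a `C²` function on `[0,∞)` at interior points. -/
lemma stmt6_tech (u : ℝ → ℝ) (hreg : ContDiffOn ℝ 2 u (Set.Ici 0)) {x : ℝ} (hx : 0 < x) :
    HasDerivAt u (deriv u x) x ∧
      HasDerivAt (deriv u) (iteratedDerivWithin 2 u (Set.Ici 0) x) x := by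
  have hmem : Set.Ici (0:ℝ) ∈ nhds x := Ici_mem_nhds hx
  have h1 : HasDerivAt u (deriv u x) x :=
    ((hreg.contDiffAt hmem).differentiableAt (by norm_num)).hasDerivAt
  refine ⟨h1, ?_⟩
  set g := derivWithin u (Set.Ici 0) with hg
  have hgC : ContDiffOn ℝ 1 g (Set.Ici 0) :=
    hreg.derivWithin (uniqueDiffOn_Ici 0) (by norm_num)
  have hgd : HasDerivAt g (deriv g x) x :=
    ((hgC.contDiffAt hmem).differentiableAt (by norm_num)).hasDerivAt
  have hev : g =ᶠ[nhds x] deriv u := by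
    filter_upwards [Ioi_mem_nhds hx] with y hy
    exact derivWithin_of_mem_nhds (Ici_mem_nhds hy)
  have h2 : HasDerivAt (deriv u) (deriv g x) x := hgd.congr_of_eventuallyEq hev.symm
  have heq : iteratedDerivWithin 2 u (Set.Ici 0) x = deriv g x := by
    have hu : UniqueDiffWithinAt ℝ (Set.Ici (0:ℝ)) x := (uniqueDiffOn_Ici 0) x hx.le
    rw [iteratedDerivWithin_succ, derivWithin_of_mem_nhds hmem]
    have hev1 : iteratedDerivWithin 1 u (Set.Ici 0) =ᶠ[nhds x] g := by
      filter_upwards [hmem] with y hy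
      exact congrFun iteratedDerivWithin_one y
    exact hev1.deriv_eq
  rw [heq]; exact h2

/-- One-sided comparison. -/
lemma stmt6_one_sided (lam : ℝ) (hlam : 0 < lam) (G : Polynomial ℝ)
    (hGnn : ∀ n, 0 ≤ G.coeff n)
    (hG'1 : G.derivative.eval 1 ≤ 1)
    (u₁ u₂ : ℝ → ℝ)
    (hreg₁ : ContDiffOn ℝ 2 u₁ (Set.Ici 0))
    (hreg₂ : ContDiffOn ℝ 2 u₂ (Set.Ici 0))
    (hode₁ : ∀ x ≥ 0, (1 / 2) * iteratedDerivWithin 2 u₁ (Set.Ici 0) x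
      + lam * (G.eval (u₁ x) - u₁ x) = 0)
    (hode₂ : ∀ x ≥ 0, (1 / 2) * iteratedDerivWithin 2 u₂ (Set.Ici 0) x
      + lam * (G.eval (u₂ x) - u₂ x) = 0)
    (h0₁ : u₁ 0 = 0) (h0₂ : u₂ 0 = 0)
    (hbd₁ : ∀ x ≥ 0, 0 ≤ u₁ x ∧ u₁ x ≤ 1)
    (hbd₂ : ∀ x ≥ 0, 0 ≤ u₂ x ∧ u₂ x ≤ 1) :
    ∀ x ≥ 0, u₁ x ≤ u₂ x := by
  set w : ℝ → ℝ := fun x => u₁ x - u₂ x with hwdef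
  set I : ℝ → ℝ := fun y =>
    iteratedDerivWithin 2 u₁ (Set.Ici 0) y - iteratedDerivWithin 2 u₂ (Set.Ici 0) y with hIdef
  have hcont : ContinuousOn w (Set.Ici 0) := hreg₁.continuousOn.sub hreg₂.continuousOn
  have hwd : ∀ x, 0 < x → HasDerivAt w (deriv w x) x := by
    intro x hx
    have h := (stmt6_tech u₁ hreg₁ hx).1.sub (stmt6_tech u₂ hreg₂ hx).1
    exact h.deriv ▸ h
  have hsecond : ∀ x, 0 < x → HasDerivAt (deriv w) (I x) x := by
    intro x hx
    have h3 : HasDerivAt (fun y => deriv u₁ y - deriv u₂ y) (I x) x :=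
      (stmt6_tech u₁ hreg₁ hx).2.sub (stmt6_tech u₂ hreg₂ hx).2
    apply h3.congr_of_eventuallyEq
    filter_upwards [Ioi_mem_nhds hx] with y hy
    have h : HasDerivAt w (deriv u₁ y - deriv u₂ y) y :=
      (stmt6_tech u₁ hreg₁ hy).1.sub (stmt6_tech u₂ hreg₂ hy).1
    exact h.deriv
  have hsign : ∀ x, 0 < x → 0 ≤ w x → 0 ≤ I x := by
    intro x hx hwx
    have e₁ := hode₁ x hx.le
    have e₂ := hode₂ x hx.le
    have hb₁ := hbd₁ x hx.le
    have hb₂ := hbd₂ x hx.le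
    have hle : u₂ x ≤ u₁ x := by
      have : 0 ≤ u₁ x - u₂ x := hwx
      linarith
    have hlip : G.eval (u₁ x) - G.eval (u₂ x) ≤ u₁ x - u₂ x :=
      stmt6_lip G hGnn hG'1 hb₂.1 hle hb₁.2
    have key : 0 ≤ lam * ((u₁ x - u₂ x) - (G.eval (u₁ x) - G.eval (u₂ x))) :=
      mul_nonneg hlam.le (by linarith)
    simp only [hIdef]
    nlinarith [e₁, e₂, key]
  -- main argument
  intro x₀ hx₀
  by_contra hcon
  push_neg at hcon
  have hc : 0 < w x₀ := by simp only [hwdef]; linarith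
  have hx₀pos : 0 < x₀ := by
    rcases eq_or_lt_of_le hx₀ with h | h
    · exfalso; rw [← h] at hc; simp [hwdef, h0₁, h0₂] at hc
    · exact h
  -- Step A : last zero (≤ 0 point) before x₀
  set S := Set.Icc 0 x₀ ∩ w ⁻¹' (Set.Iic 0) with hSdef
  have hSclosed : IsClosed S :=
    ContinuousOn.preimage_isClosed_of_isClosed
      (hcont.mono Icc_subset_Ici_self) isClosed_Icc isClosed_Iic
  have hSne : S.Nonempty := ⟨0, ⟨le_rfl, hx₀⟩, by simp [hwdef, h0₁, h0₂]⟩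
  have hSbdd : BddAbove S := ⟨x₀, fun y hy => hy.1.2⟩
  set a := sSup S with hadef
  have haS : a ∈ S := hSclosed.csSup_mem hSne hSbdd
  have ha0 : 0 ≤ a := haS.1.1
  have haw : w a ≤ 0 := haS.2
  have hax : a < x₀ := lt_of_le_of_ne haS.1.2 (fun h => by rw [h] at haw; linarith)
  have hpos : ∀ y, a < y → y ≤ x₀ → 0 < w y := by
    intro y hy1 hy2
    by_contra h
    push_neg at h
    exact absurd (le_csSup hSbdd ⟨⟨le_trans ha0 hy1.le, hy2⟩, h⟩) (not_le.mpr hy1)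
  -- MVT on [a, x₀]
  have hIcc0 : Set.Icc a x₀ ⊆ Set.Ici (0:ℝ) := fun y hy => le_trans ha0 hy.1
  obtain ⟨ξ, hξ, hξd⟩ := exists_hasDerivAt_eq_slope w (deriv w) hax (hcont.mono hIcc0)
    (fun y hy => hwd y (lt_of_le_of_lt ha0 hy.1))
  set m := (w x₀ - w a) / (x₀ - a) with hmdef
  have hm : 0 < m := div_pos (by linarith) (by linarith)
  have hξpos : 0 < ξ := lt_of_le_of_lt ha0 hξ.1
  have hwξ : 0 < w ξ := hpos ξ hξ.1 hξ.2.le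
  -- double-MVT helper : if w ≥ 0 on [ξ, η] then deriv w η ≥ m
  have hDge : ∀ η, ξ < η → (∀ y, ξ ≤ y → y ≤ η → 0 ≤ w y) → m ≤ deriv w η := by
    intro η hη hwnn
    obtain ⟨ζ, hζ, hζd⟩ := exists_hasDerivAt_eq_slope (deriv w) I hη
      (fun y hy => ((hsecond y (lt_of_lt_of_le hξpos hy.1)).differentiableAt.continuousAt).continuousWithinAt)
      (fun y hy => hsecond y (lt_trans hξpos hy.1))
    have h0 : 0 ≤ I ζ := hsign ζ (lt_trans hξpos hζ.1) (hwnn ζ hζ.1.le hζ.2.le)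
    rw [hζd] at h0
    have hηξ : 0 < η - ξ := by linarith
    have : 0 ≤ deriv w η - deriv w ξ := by
      have := mul_nonneg h0 hηξ.le
      rwa [div_mul_cancel₀ _ (ne_of_gt hηξ)] at this
    rw [hξd] at this
    linarith
  -- Step B : w ≥ w ξ on [ξ, ∞)
  have hge : ∀ x, ξ ≤ x → w ξ ≤ w x := by
    by_contra hB
    push_neg at hB
    obtain ⟨x₁, hx₁, hwx₁⟩ := hB
    set B := {x | ξ ≤ x ∧ w x < w ξ} with hBdef
    have hBne : B.Nonempty := ⟨x₁, hx₁, hwx₁⟩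
    have hBbdd : BddBelow B := ⟨ξ, fun y hy => hy.1⟩
    set b := sInf B with hbdef
    have hbξ : ξ ≤ b := le_csInf hBne fun y hy => hy.1
    -- local strict increase at ξ
    have hloc : ∀ᶠ y in nhdsWithin ξ (Set.Ioi ξ), w ξ < w y := by
      have hDξ : HasDerivAt w m ξ := hξd ▸ hwd ξ hξpos
      have hslope := hasDerivAt_iff_tendsto_slope.mp hDξ
      have hev : ∀ᶠ y in nhdsWithin ξ {ξ}ᶜ, 0 < slope w ξ y :=
        hslope.eventually (eventually_gt_nhds hm)
      have hmono : nhdsWithin ξ (Set.Ioi ξ) ≤ nhdsWithin ξ {ξ}ᶜ :=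
        nhdsWithin_mono ξ (fun y hy => ne_of_gt hy)
      filter_upwards [hmono hev, self_mem_nhdsWithin] with y hy hy'
      have hyξ : 0 < y - ξ := sub_pos.mpr hy'
      rw [slope_def_field] at hy
      have := mul_pos hy hyξ
      rw [div_mul_cancel₀ _ (ne_of_gt hyξ)] at this
      linarith
    obtain ⟨du, hdu, hδ⟩ := mem_nhdsGT_iff_exists_Ioo_subset.mp hloc
    have hbgt : ξ < b := by
      refine lt_of_lt_of_le hdu (le_csInf hBne fun y hy => ?_)
      by_contra hcon2
      push_neg at hcon2
      have hyξ : ξ < y := lt_of_le_of_ne hy.1 (fun h => by rw [← h] at hy; exact absurd hy.2 (lt_irrefl _))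
      exact absurd (hδ ⟨hyξ, hcon2⟩) (not_lt.mpr hy.2.le)
    have hIb : ∀ y, ξ ≤ y → y < b → w ξ ≤ w y := by
      intro y h1 h2
      by_contra h
      push_neg at h
      exact absurd (csInf_le hBbdd ⟨h1, h⟩) (not_le.mpr h2)
    have hbpos : 0 < b := lt_trans hξpos hbgt
    have hwb_le : w b ≤ w ξ := by
      have hbcl := csInf_mem_closure hBne hBbdd
      have hCclosed : IsClosed (Set.Ici ξ ∩ w ⁻¹' Set.Iic (w ξ)) :=
        ContinuousOn.preimage_isClosed_of_isClosed
          (hcont.mono (Ici_subset_Ici.mpr hξpos.le)) isClosed_Ici isClosed_Iic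
      have hBC : B ⊆ Set.Ici ξ ∩ w ⁻¹' Set.Iic (w ξ) := fun y hy => ⟨hy.1, hy.2.le⟩
      exact (hCclosed.closure_subset ((closure_mono hBC) hbcl)).2
    have hwb_ge : w ξ ≤ w b := by
      have hca : ContinuousAt w b := hcont.continuousAt (Ici_mem_nhds hbpos)
      have htd : Tendsto w (nhdsWithin b (Set.Iio b)) (nhds (w b)) :=
        hca.tendsto.mono_left nhdsWithin_le_nhds
      refine ge_of_tendsto htd ?_
      filter_upwards [Ioo_mem_nhdsLT_of_mem (⟨hbgt, le_rfl⟩ : b ∈ Set.Ioc ξ b)] with y hy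
      exact hIb y hy.1.le hy.2
    have hwb : w b = w ξ := le_antisymm hwb_le hwb_ge
    -- MVT on [ξ, b]
    obtain ⟨η, hη, hηd⟩ := exists_hasDerivAt_eq_slope w (deriv w) hbgt
      (hcont.mono (fun y hy => le_trans hξpos.le hy.1))
      (fun y hy => hwd y (lt_trans hξpos hy.1))
    have hwnn : ∀ y, ξ ≤ y → y ≤ η → 0 ≤ w y := by
      intro y h1 h2
      exact le_trans hwξ.le (hIb y h1 (lt_of_le_of_lt h2 hη.2))
    have hmle : m ≤ deriv w η := hDge η hη.1 hwnn
    rw [hηd, hwb] at hmle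
    simp at hmle
    linarith
  -- Final : linear growth contradicts boundedness
  set X := ξ + 2 / m with hXdef
  have hXξ : ξ < X := by
    rw [hXdef]
    have : 0 < 2 / m := by positivity
    linarith
  obtain ⟨η, hη, hηd⟩ := exists_hasDerivAt_eq_slope w (deriv w) hXξ
    (hcont.mono (fun y hy => le_trans hξpos.le hy.1))
    (fun y hy => hwd y (lt_trans hξpos hy.1))
  have hmle : m ≤ deriv w η :=
    hDge η hη.1 (fun y h1 _ => le_trans hwξ.le (hge y h1))
  rw [hηd] at hmle
  have hXξ' : 0 < X - ξ := by linarith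
  have hgrow : m * (X - ξ) ≤ w X - w ξ := by
    have := mul_le_mul_of_nonneg_right hmle hXξ'.le
    rwa [div_mul_cancel₀ _ (ne_of_gt hXξ')] at this
  have hXval : m * (X - ξ) = 2 := by
    simp only [hXdef]
    field_simp
    ring
  have hbX₁ := hbd₁ X (le_trans hξpos.le hXξ.le)
  have hbX₂ := hbd₂ X (le_trans hξpos.le hXξ.le)
  have hwX : w X ≤ 1 := by simp only [hwdef]; linarith
  linarith

/-- Uniqueness for the stationary probabilistic polynomial equation in the
critical and sub-critical cases: two C² solutions with values in [0,1] and
zero boundary value coincide on [0,∞). -/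
theorem stmt_6 (lam : ℝ) (hlam : 0 < lam) (G : Polynomial ℝ)
    (hGnn : ∀ n, 0 ≤ G.coeff n)
    (hG1 : G.eval 1 = 1)
    (hG'1 : G.derivative.eval 1 ≤ 1)
    (u₁ u₂ : ℝ → ℝ)
    (hreg₁ : ContDiffOn ℝ 2 u₁ (Set.Ici 0))
    (hreg₂ : ContDiffOn ℝ 2 u₂ (Set.Ici 0))
    (hode₁ : ∀ x ≥ 0, (1 / 2) * iteratedDerivWithin 2 u₁ (Set.Ici 0) x
      + lam * (G.eval (u₁ x) - u₁ x) = 0)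
    (hode₂ : ∀ x ≥ 0, (1 / 2) * iteratedDerivWithin 2 u₂ (Set.Ici 0) x
      + lam * (G.eval (u₂ x) - u₂ x) = 0)
    (h0₁ : u₁ 0 = 0) (h0₂ : u₂ 0 = 0)
    (hbd₁ : ∀ x ≥ 0, 0 ≤ u₁ x ∧ u₁ x ≤ 1)
    (hbd₂ : ∀ x ≥ 0, 0 ≤ u₂ x ∧ u₂ x ≤ 1) :
    ∀ x ≥ 0, u₁ x = u₂ x := by
  intro x hx
  exact le_antisymm
    (stmt6_one_sided lam hlam G hGnn hG'1 u₁ u₂ hreg₁ hreg₂ hode₁ hode₂ h0₁ h0₂ hbd₁ hbd₂ x hx)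
    (stmt6_one_sided lam hlam G hGnn hG'1 u₂ u₁ hreg₂ hreg₁ hode₂ hode₁ h0₂ h0₁ hbd₂ hbd₁ x hx)
end

section
/- Let λ > 0, let t₀ > 0, and let G be a polynomial with non-negative real coefficients such that G(1) = 1. Suppose u : ℝ → ℝ is twice continuously differentiable on [0, ∞), satisfies (1/2)·u''(x) + λ·(G(u(x)) − u(x)) = 0 for all x ≥ 0, u(0) = 0, and 0 ≤ u(x) ≤ 1 for all x ≥ 0. Suppose w : [0, ∞) × [0, t₀] → ℝ is continuous, is twice continuously differentiable in x and once in t on the interior, satisfies the parabolic equation ∂w/∂t = (1/2)·∂²w/∂x² + λ·(G(w) − w) there, satisfies 0 ≤ w(x, t) ≤ 1 for all (x, t), satisfies w(0, t) ≤ 0 for all t ∈ [0, t₀], satisfies w(x, 0) ≤ u(x) for all x ≥ 0, and satisfies sup_{t ∈ [0, t₀]} |u(x) − w(x, t)| → 0 as x → ∞. Then w(x, t) ≤ u(x) for all x ≥ 0 and t ∈ [0, t₀]. -/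
open Set Filter Topology

lemma poly_mono {G : Polynomial ℝ} (h : ∀ n, 0 ≤ G.coeff n) {a b : ℝ}
    (ha : 0 ≤ a) (hab : a ≤ b) : G.eval a ≤ G.eval b := by
  rw [Polynomial.eval_eq_sum_range, Polynomial.eval_eq_sum_range]
  apply Finset.sum_le_sum
  intro i _
  exact mul_le_mul_of_nonneg_left (pow_le_pow_left₀ ha hab i) (h i)

lemma poly_lip {G : Polynomial ℝ} (h : ∀ n, 0 ≤ G.coeff n) {a b : ℝ}
    (ha : 0 ≤ a) (hab : a ≤ b) (hb : b ≤ 1) :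
    G.eval b - G.eval a ≤ G.derivative.eval 1 * (b - a) := by
  rcases eq_or_lt_of_le hab with rfl | hab'
  · simp
  · obtain ⟨c, hc, hc'⟩ := exists_hasDerivAt_eq_slope (fun x => G.eval x) _ hab'
      (Polynomial.continuous G).continuousOn
      (fun x _ => G.hasDerivAt x)
    have h1 : G.derivative.eval c ≤ G.derivative.eval 1 := by
      apply poly_mono (fun n => ?_) (le_of_lt (lt_of_le_of_lt ha hc.1)) (le_trans hc.2.le hb)
      rw [Polynomial.coeff_derivative]
      have := h (n + 1)
      positivity
    rw [eq_div_iff (sub_ne_zero.mpr (ne_of_gt hab'))] at hc'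
    nlinarith [sub_pos.mpr hab']

lemma deriv_nonneg_of_left_max {f : ℝ → ℝ} {f' a c : ℝ} (hca : c < a)
    (hf : HasDerivAt f f' a) (hmax : ∀ s ∈ Icc c a, f s ≤ f a) : 0 ≤ f' := by
  have ht : Tendsto (slope f a) (𝓝[<] a) (𝓝 f') :=
    (hasDerivAt_iff_tendsto_slope.mp hf).mono_left
      (nhdsWithin_mono _ fun y hy => ne_of_lt hy)
  refine ge_of_tendsto ht ?_
  filter_upwards [Ioo_mem_nhdsLT_of_mem (by constructor <;> [exact hca; rfl] :
    a ∈ Ioc c a)] with y hy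
  rw [slope_def_field]
  exact div_nonneg_of_nonpos (sub_nonpos.mpr (hmax y ⟨hy.1.le, hy.2.le⟩))
    (sub_nonpos.mpr hy.2.le)

lemma second_deriv_nonpos_of_isLocalMax {f : ℝ → ℝ} {x : ℝ}
    (hf : ∀ᶠ y in 𝓝 x, DifferentiableAt ℝ f y)
    (hmax : IsLocalMax f x) : deriv (deriv f) x ≤ 0 := by
  by_contra h
  push_neg at h
  have hdiff : DifferentiableAt ℝ (deriv f) x := by
    by_contra hd
    rw [deriv_zero_of_not_differentiableAt hd] at h
    exact lt_irrefl _ h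
  have hg0 : deriv f x = 0 := hmax.deriv_eq_zero
  have ht : Tendsto (slope (deriv f) x) (𝓝[>] x) (𝓝 (deriv (deriv f) x)) :=
    (hasDerivAt_iff_tendsto_slope.mp hdiff.hasDerivAt).mono_left
      (nhdsWithin_mono _ fun y hy => ne_of_gt hy)
  have hpos : ∀ᶠ y in 𝓝[>] x, 0 < deriv f y := by
    filter_upwards [ht.eventually (eventually_gt_nhds h), self_mem_nhdsWithin] with y hy hy'
    rw [slope_def_field, hg0, sub_zero] at hy
    have := mul_pos hy (sub_pos.mpr (hy' : x < y))
    rwa [div_mul_cancel₀ _ (sub_ne_zero.mpr (ne_of_gt hy'))] at this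
  obtain ⟨u, hu, hsub⟩ := mem_nhdsGT_iff_exists_Ioo_subset.mp hpos
  obtain ⟨ε, hε, hball⟩ := Metric.eventually_nhds_iff.mp hf
  obtain ⟨ε₂, hε₂, hball₂⟩ := Metric.eventually_nhds_iff.mp hmax
  set b := min (min u (x + ε)) (x + ε₂) with hb
  have hxb : x < b := by
    simp only [hb, lt_min_iff]
    exact ⟨⟨hu, by linarith⟩, by linarith⟩
  set y := (x + b) / 2 with hy
  have hxy : x < y := by simp [hy]; linarith
  have hyb : y < b := by simp [hy]; linarith
  have hdiffIcc : ∀ z ∈ Icc x y, DifferentiableAt ℝ f z := by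
    intro z hz
    apply hball
    rw [Real.dist_eq, abs_lt]
    constructor
    · linarith [hz.1]
    · have : y < x + ε := lt_of_lt_of_le hyb (le_trans (min_le_left _ _) (min_le_right _ _))
      linarith [hz.2]
  obtain ⟨c, hc, hc'⟩ := exists_hasDerivAt_eq_slope f (deriv f) hxy
    (fun z hz => (hdiffIcc z hz).continuousAt.continuousWithinAt)
    (fun z hz => (hdiffIcc z (Ioo_subset_Icc_self hz)).hasDerivAt)
  have hcpos : 0 < deriv f c := hsub ⟨hc.1, lt_of_lt_of_le (lt_trans hc.2 hyb)
    (le_trans (min_le_left _ _) (min_le_left _ _))⟩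
  have hfy : f y ≤ f x := by
    apply hball₂
    rw [Real.dist_eq, abs_lt]
    have : y < x + ε₂ := lt_of_lt_of_le hyb (min_le_right _ _)
    constructor <;> linarith
  rw [hc'] at hcpos
  have := div_nonpos_of_nonpos_of_nonneg (sub_nonpos.mpr hfy) (sub_nonneg.mpr hxy.le)
  linarith

lemma iterated_two_eq {u : ℝ → ℝ} {x : ℝ} (hx : 0 < x) :
    iteratedDerivWithin 2 u (Set.Ici 0) x = deriv (deriv u) x := by
  have hU : UniqueDiffOn ℝ (Ici (0:ℝ)) := uniqueDiffOn_Ici 0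
  have hxm : x ∈ Ici (0:ℝ) := le_of_lt hx
  have hnb : Ici (0:ℝ) ∈ 𝓝 x := Ici_mem_nhds hx
  rw [show (2:ℕ) = 1 + 1 from rfl, iteratedDerivWithin_succ,
    derivWithin_of_mem_nhds hnb]
  have hev : iteratedDerivWithin 1 u (Ici 0) =ᶠ[𝓝 x] deriv u := by
    filter_upwards [isOpen_Ioi.mem_nhds hx] with y hy
    rw [iteratedDerivWithin_one,
      derivWithin_of_mem_nhds (Ici_mem_nhds hy)]
  exact hev.deriv_eq

set_option maxHeartbeats 1000000 in
/-- Maximum-principle comparison for probabilistic polynomial parabolic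
equations: a stationary solution u dominates any [0,1]-valued solution w of
the parabolic equation starting below it, nonpositive at the spatial boundary,
and agreeing with u at infinity uniformly in t. -/
theorem stmt_7 (lam t₀ : ℝ) (hlam : 0 < lam) (ht₀ : 0 < t₀)
    (G : Polynomial ℝ) (hGnn : ∀ n, 0 ≤ G.coeff n) (hG1 : G.eval 1 = 1)
    (u : ℝ → ℝ) (hureg : ContDiffOn ℝ 2 u (Set.Ici 0))
    (huode : ∀ x ≥ 0, (1 / 2) * iteratedDerivWithin 2 u (Set.Ici 0) x
      + lam * (G.eval (u x) - u x) = 0)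
    (hu0 : u 0 = 0)
    (hubd : ∀ x ≥ 0, 0 ≤ u x ∧ u x ≤ 1)
    (w : ℝ → ℝ → ℝ)
    (hwc : ContinuousOn (fun p : ℝ × ℝ => w p.1 p.2) (Set.Ici 0 ×ˢ Set.Icc 0 t₀))
    (hwx : ∀ t ∈ Set.Ioo 0 t₀, ContDiffOn ℝ 2 (fun x => w x t) (Set.Ioi 0))
    (hwt : ∀ x ∈ Set.Ioi (0 : ℝ), ContDiffOn ℝ 1 (fun t => w x t) (Set.Ioo 0 t₀))
    (hpde : ∀ x ∈ Set.Ioi (0 : ℝ), ∀ t ∈ Set.Ioo 0 t₀,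
      deriv (fun s => w x s) t
        = (1 / 2) * deriv (deriv fun y => w y t) x
          + lam * (G.eval (w x t) - w x t))
    (hwbd : ∀ x ≥ 0, ∀ t ∈ Set.Icc 0 t₀, 0 ≤ w x t ∧ w x t ≤ 1)
    (hw0 : ∀ t ∈ Set.Icc 0 t₀, w 0 t ≤ 0)
    (hinit : ∀ x ≥ 0, w x 0 ≤ u x)
    (hinf : Filter.Tendsto (fun x => ⨆ t : Set.Icc 0 t₀, |u x - w x t|)
      Filter.atTop (nhds 0)) :
    ∀ x ≥ 0, ∀ t ∈ Set.Icc 0 t₀, w x t ≤ u x := by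
  obtain ⟨L, hLdef⟩ : ∃ L, L = G.derivative.eval 1 := ⟨_, rfl⟩
  have hGnn' : ∀ n, 0 ≤ G.derivative.coeff n := by
    intro n
    rw [Polynomial.coeff_derivative]
    have := hGnn (n + 1)
    positivity
  have hLnn : 0 ≤ L := by
    have h0 : (0:ℝ) ≤ G.derivative.eval 0 := by
      rw [← Polynomial.coeff_zero_eq_eval_zero]
      exact hGnn' 0
    rw [hLdef]
    exact le_trans h0 (poly_mono hGnn' le_rfl zero_le_one)
  set k := lam * L with hkdef
  have hk : 0 ≤ k := mul_nonneg hlam.le hLnn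
  -- pointwise bound by the sup
  have habs1 : ∀ x ≥ 0, ∀ t ∈ Icc 0 t₀, |u x - w x t| ≤ 1 := by
    intro x hx t ht
    obtain ⟨h1, h2⟩ := hubd x hx
    obtain ⟨h3, h4⟩ := hwbd x hx t ht
    rw [abs_le]; constructor <;> linarith
  have hbdd : ∀ x ≥ 0, BddAbove (range fun t : Icc (0:ℝ) t₀ => |u x - w x t|) := by
    intro x hx
    exact ⟨1, by rintro y ⟨t, rfl⟩; exact habs1 x hx t t.2⟩
  have hptw : ∀ x ≥ 0, ∀ t ∈ Icc 0 t₀,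
      |u x - w x t| ≤ ⨆ t' : Icc (0:ℝ) t₀, |u x - w x t'| := by
    intro x hx t ht
    exact le_ciSup (hbdd x hx) ⟨t, ht⟩
  -- the core claim
  have claim : ∀ t₁ ∈ Ioo 0 t₀, ∀ ε > 0, ∀ x ≥ 0, ∀ t ∈ Icc 0 t₁,
      Real.exp (-(k * t)) * (w x t - u x) ≤ ε := by
    intro t₁ ht₁ ε hε x hx t ht
    have ht₁0 : 0 < t₁ := ht₁.1
    have ht₁t₀ : t₁ < t₀ := ht₁.2
    have htt₀ : t ∈ Icc 0 t₀ := ⟨ht.1, le_trans ht.2 ht₁t₀.le⟩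
    obtain ⟨R₀, hR₀⟩ := eventually_atTop.mp (hinf.eventually (eventually_lt_nhds hε))
    set R := max R₀ 1 with hRdef
    have hR1 : (1:ℝ) ≤ R := le_max_right _ _
    have hRpos : (0:ℝ) < R := lt_of_lt_of_le one_pos hR1
    have hRR₀ : R₀ ≤ R := le_max_left _ _
    -- direct bound for x ≥ R₀
    by_cases hxR : R₀ ≤ x
    · rcases le_or_gt (w x t - u x) 0 with hneg | hpos
      · exact le_trans (mul_nonpos_of_nonneg_of_nonpos (Real.exp_pos _).le hneg) hε.le
      · have h1 : Real.exp (-(k * t)) ≤ 1 := by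
          rw [Real.exp_le_one_iff]
          have : 0 ≤ k * t := mul_nonneg hk ht.1
          linarith
        have h2 : w x t - u x ≤ |u x - w x t| := by
          rw [abs_sub_comm]; exact le_abs_self _
        calc Real.exp (-(k * t)) * (w x t - u x) ≤ 1 * (w x t - u x) :=
              mul_le_mul_of_nonneg_right h1 hpos.le
          _ = w x t - u x := one_mul _
          _ ≤ |u x - w x t| := h2
          _ ≤ ⨆ t' : Icc (0:ℝ) t₀, |u x - w x t'| := hptw x hx t htt₀
          _ ≤ ε := (hR₀ x hxR).le
    · push_neg at hxR
      have hxRlt : x < R := lt_of_lt_of_le hxR hRR₀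
      -- compact maximum argument
      set ψ : ℝ × ℝ → ℝ := fun p => Real.exp (-(k * p.2)) * (w p.1 p.2 - u p.1) with hψdef
      set K : Set (ℝ × ℝ) := Icc 0 R ×ˢ Icc 0 t₁ with hKdef
      have hKsub : K ⊆ Ici 0 ×ˢ Icc 0 t₀ :=
        prod_mono (Icc_subset_Ici_self) (Icc_subset_Icc le_rfl ht₁t₀.le)
      have hKc : IsCompact K := isCompact_Icc.prod isCompact_Icc
      have hψeval : ∀ a b, ψ (a, b) = Real.exp (-(k * b)) * (w a b - u a) := by
        intro a b; rw [hψdef]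
      have hψc : ContinuousOn ψ K := by
        rw [hψdef]
        apply ContinuousOn.mul
        · exact (Real.continuous_exp.comp (continuous_const.mul continuous_snd).neg).continuousOn
        · apply ContinuousOn.sub (hwc.mono hKsub)
          exact hureg.continuousOn.comp continuous_fst.continuousOn
            (fun p hp => (hKsub hp).1)
      obtain ⟨p, hpK, hpmax⟩ := hKc.exists_isMaxOn
        ⟨(0, 0), ⟨⟨le_rfl, hRpos.le⟩, ⟨le_rfl, ht₁0.le⟩⟩⟩ hψc
      obtain ⟨x', t'⟩ := p
      obtain ⟨hx'K, ht'K⟩ := hpK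
      simp only [mem_Icc] at hx'K ht'K
      set M := ψ (x', t') with hMdef
      by_cases hM : M ≤ ε
      · rw [← hψeval]
        exact le_trans (hpmax ⟨⟨hx, hxRlt.le⟩, ht⟩) hM
      push_neg at hM
      exfalso
      have hMpos : 0 < M := lt_trans hε hM
      have hx't₀ : (x', t') ∈ Ici (0:ℝ) ×ˢ Icc (0:ℝ) t₀ := hKsub ⟨by
        exact mem_Icc.mpr hx'K, mem_Icc.mpr ht'K⟩
      have hvpos : 0 < w x' t' - u x' := by
        have := hMpos
        rw [hMdef, hψeval] at this
        nlinarith [Real.exp_pos (-(k * t'))]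
      -- x' ≠ 0
      have hx'0 : 0 < x' := by
        rcases eq_or_lt_of_le hx'K.1 with h0 | h; swap; · exact h
        exfalso
        have := hw0 t' ⟨ht'K.1, le_trans ht'K.2 ht₁t₀.le⟩
        rw [← h0] at hvpos
        rw [hu0] at hvpos
        linarith
      -- x' ≠ R
      have hx'R : x' < R := by
        rcases eq_or_lt_of_le hx'K.2 with h0 | h; swap; · exact h
        exfalso
        have hsup : |u x' - w x' t'| < ε := by
          have := hR₀ x' (by rw [h0]; exact hRR₀)
          exact lt_of_le_of_lt (hptw x' hx'K.1 t' ⟨ht'K.1, le_trans ht'K.2 ht₁t₀.le⟩) this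
        have h2 : w x' t' - u x' ≤ |u x' - w x' t'| := by
          rw [abs_sub_comm]; exact le_abs_self _
        have h1 : Real.exp (-(k * t')) ≤ 1 := by
          rw [Real.exp_le_one_iff]
          have : 0 ≤ k * t' := mul_nonneg hk ht'K.1
          linarith
        have : M ≤ w x' t' - u x' := by
          rw [hMdef, hψeval]
          calc Real.exp (-(k * t')) * (w x' t' - u x') ≤ 1 * (w x' t' - u x') :=
                mul_le_mul_of_nonneg_right h1 hvpos.le
            _ = _ := one_mul _
        linarith
      -- t' ≠ 0
      have ht'0 : 0 < t' := by
        rcases eq_or_lt_of_le ht'K.1 with h0 | h; swap; · exact h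
        exfalso
        have := hinit x' hx'K.1
        rw [← h0] at hvpos
        linarith
      have ht't₀ : t' < t₀ := lt_of_le_of_lt ht'K.2 ht₁t₀
      -- space: second derivative comparison
      set f : ℝ → ℝ := fun y => w y t' - u y with hfdef
      have hfeval : ∀ y, f y = w y t' - u y := by intro y; rw [hfdef]
      have hfC2 : ContDiffOn ℝ 2 f (Ioi 0) :=
        (hwx t' ⟨ht'0, ht't₀⟩).sub (hureg.mono Ioi_subset_Ici_self)
      have hfmax : IsLocalMax f x' := by
        have hcexp : (0:ℝ) < Real.exp (-(k * t')) := Real.exp_pos _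
        filter_upwards [IsOpen.mem_nhds (isOpen_Ioo) (⟨hx'0, hx'R⟩ : x' ∈ Ioo 0 R)] with y hy
        have hyK : (y, t') ∈ K := ⟨⟨hy.1.le, hy.2.le⟩, ⟨ht'K.1, ht'K.2⟩⟩
        have h1 : ψ (y, t') ≤ Real.exp (-(k * t')) * (w x' t' - u x') := hpmax hyK
        rw [hψeval] at h1
        rw [hfeval, hfeval]
        nlinarith
      have hfev : ∀ᶠ y in 𝓝 x', DifferentiableAt ℝ f y := by
        filter_upwards [isOpen_Ioi.mem_nhds hx'0] with y hy
        exact ((hfC2.differentiableOn two_ne_zero) y hy).differentiableAt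
          (isOpen_Ioi.mem_nhds hy)
      have h2nd : deriv (deriv f) x' ≤ 0 := second_deriv_nonpos_of_isLocalMax hfev hfmax
      -- identify deriv (deriv f)
      have hWdiff : ∀ y ∈ Ioi (0:ℝ), DifferentiableAt ℝ (fun z => w z t') y := by
        intro y hy
        exact (((hwx t' ⟨ht'0, ht't₀⟩).differentiableOn two_ne_zero) y hy).differentiableAt
          (isOpen_Ioi.mem_nhds hy)
      have hudiff : ∀ y ∈ Ioi (0:ℝ), DifferentiableAt ℝ u y := by
        intro y hy
        exact ((hureg.differentiableOn two_ne_zero) y (show (0:ℝ) ≤ y from le_of_lt hy)).differentiableAt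
          (Ici_mem_nhds hy)
      have hev1 : deriv f =ᶠ[𝓝 x'] fun y => deriv (fun z => w z t') y - deriv u y := by
        filter_upwards [isOpen_Ioi.mem_nhds hx'0] with y hy
        exact deriv_sub (hWdiff y hy) (hudiff y hy)
      have hWd1 : ContDiffOn ℝ 1 (deriv (fun z => w z t')) (Ioi 0) :=
        (hwx t' ⟨ht'0, ht't₀⟩).deriv_of_isOpen isOpen_Ioi (by norm_num)
      have hud1 : ContDiffOn ℝ 1 (deriv u) (Ioi 0) :=
        (hureg.mono Ioi_subset_Ici_self).deriv_of_isOpen isOpen_Ioi (by norm_num)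
      have hWd1' : DifferentiableAt ℝ (deriv (fun z => w z t')) x' :=
        ((hWd1.differentiableOn one_ne_zero) x' hx'0).differentiableAt (isOpen_Ioi.mem_nhds hx'0)
      have hud1' : DifferentiableAt ℝ (deriv u) x' :=
        ((hud1.differentiableOn one_ne_zero) x' hx'0).differentiableAt (isOpen_Ioi.mem_nhds hx'0)
      have e1 : deriv (deriv f) x'
          = deriv (deriv fun y => w y t') x' - deriv (deriv u) x' := by
        rw [hev1.deriv_eq]
        exact deriv_sub hWd1' hud1'
      have hspace : deriv (deriv fun y => w y t') x'
          ≤ iteratedDerivWithin 2 u (Set.Ici 0) x' := by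
        rw [iterated_two_eq hx'0]
        linarith [h2nd, e1.symm.le]
      -- time: derivative nonneg at the max
      have hwtd : DifferentiableAt ℝ (fun s => w x' s) t' :=
        (((hwt x' hx'0).differentiableOn one_ne_zero) t' ⟨ht'0, ht't₀⟩).differentiableAt
          (isOpen_Ioo.mem_nhds ⟨ht'0, ht't₀⟩)
      set wt := deriv (fun s => w x' s) t' with hwtdef
      have hgd : HasDerivAt (fun s => Real.exp (-(k * s)) * (w x' s - u x'))
          ((-k) * Real.exp (-(k * t')) * (w x' t' - u x')
            + Real.exp (-(k * t')) * wt) t' := by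
        have h1 : HasDerivAt (fun s : ℝ => Real.exp (-(k * s))) ((-k) * Real.exp (-(k * t'))) t' := by
          have : HasDerivAt (fun s : ℝ => -(k * s)) (-k) t' := by
            simpa using ((hasDerivAt_id t').const_mul k).fun_neg
          simpa [mul_comm, Function.comp_def] using (Real.hasDerivAt_exp (-(k * t'))).comp t' this
        have h2 : HasDerivAt (fun s => w x' s - u x') wt t' :=
          (hwtd.hasDerivAt).sub_const _
        simpa using h1.fun_mul h2
      have htime : 0 ≤ (-k) * Real.exp (-(k * t')) * (w x' t' - u x')
            + Real.exp (-(k * t')) * wt := by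
        apply deriv_nonneg_of_left_max ht'0 hgd
        intro s hs
        have hsK : (x', s) ∈ K := ⟨⟨hx'0.le, hx'R.le⟩, ⟨hs.1, le_trans hs.2 ht'K.2⟩⟩
        have h1 : ψ (x', s) ≤ Real.exp (-(k * t')) * (w x' t' - u x') := hpmax hsK
        rw [hψeval] at h1
        exact h1
      have htime' : k * (w x' t' - u x') ≤ wt := by
        have hexp := Real.exp_pos (-(k * t'))
        nlinarith
      -- combine with PDE, ODE, Lipschitz
      have hPDE := hpde x' hx'0 t' ⟨ht'0, ht't₀⟩
      have hODE := huode x' hx'K.1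
      have hu01 := hubd x' hx'K.1
      have hw01 := hwbd x' hx'K.1 t' ⟨ht'K.1, ht't₀.le⟩
      have hlip : G.eval (w x' t') - G.eval (u x') ≤ L * (w x' t' - u x') := by
        rw [hLdef]
        exact poly_lip hGnn hu01.1 (by linarith) hw01.2
      rw [← hwtdef] at hPDE
      nlinarith [hvpos, hspace]
  -- conclude for t < t₀
  have hlt : ∀ x ≥ 0, ∀ t ∈ Ico 0 t₀, w x t ≤ u x := by
    intro x hx t ht
    set t₁ := (t + t₀) / 2 with ht₁def
    have ht₁ : t₁ ∈ Ioo 0 t₀ := ⟨by simp [ht₁def]; nlinarith [ht.1, ht.2], by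
      simp [ht₁def]; nlinarith [ht.2]⟩
    have htt₁ : t ∈ Icc 0 t₁ := ⟨ht.1, by simp [ht₁def]; linarith [ht.2]⟩
    have key0 : ∀ ε > 0, Real.exp (-(k * t)) * (w x t - u x) ≤ 0 + ε := by
      intro ε hε
      have := claim t₁ ht₁ ε hε x hx t htt₁
      linarith
    have key : Real.exp (-(k * t)) * (w x t - u x) ≤ 0 := le_of_forall_pos_le_add key0
    nlinarith [Real.exp_pos (-(k * t))]
  intro x hx t ht
  rcases eq_or_lt_of_le ht.2 with h0 | h
  · -- t = t₀ : continuity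
    subst h0
    have hcx : ContinuousOn (fun s => w x s) (Icc 0 t) := by
      have hg : Continuous (fun s : ℝ => ((x : ℝ), s)) := continuous_const.prodMk continuous_id
      exact hwc.comp hg.continuousOn (fun s hs => ⟨hx, hs⟩)
    have hcl : t ∈ closure (Ico (0:ℝ) t) := by
      rw [closure_Ico (ne_of_lt ht₀)]
      exact ⟨ht₀.le, le_rfl⟩
    have hne : (𝓝[Ico (0:ℝ) t] t).NeBot := mem_closure_iff_nhdsWithin_neBot.mp hcl
    have htend : Tendsto (fun s => w x s) (𝓝[Ico (0:ℝ) t] t) (𝓝 (w x t)) :=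
      ((hcx t ⟨ht.1, le_rfl⟩).mono Ico_subset_Icc_self)
    apply le_of_tendsto htend
    filter_upwards [self_mem_nhdsWithin] with s hs
    exact hlt x hx s hs
  · exact hlt x hx t ⟨ht.1, h⟩
end

section
/- Let λ > 0. If u : ℝ → ℝ is twice continuously differentiable on [0, ∞), satisfies (1/2)·u''(x) + (λ/2)·(u(x) − 1)² = 0 for all x ≥ 0, u(0) = 0, and u(x) ≥ 0 for all x ≥ 0, then u(x) ≤ 1 for all x ≥ 0; consequently u(x) = 1 − 1/(√(λ/6)·x + 1)² for all x ≥ 0. -/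
open Set

lemma aux_escape {g : ℝ → ℝ} {k a : ℝ} (hk : 0 < k)
    (h : AntitoneOn (fun x => g x + k * x) (Set.Ici a))
    (hg : ∀ x ≥ a, 0 ≤ g x) : False := by
  set X := max a ((g a + k * a + 1) / k) with hX
  have hXa : a ≤ X := le_max_left _ _
  have hX2 : (g a + k * a + 1) / k ≤ X := le_max_right _ _
  have h1 := h (self_mem_Ici) (mem_Ici.mpr hXa) hXa
  have h2 := hg X hXa
  have h3 : g a + k * a + 1 ≤ k * X := by
    rw [div_le_iff₀ hk] at hX2; linarith [hX2]
  simp only at h1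
  linarith

lemma aux_kmul {k : ℝ} (x : ℝ) : HasDerivAt (fun y : ℝ => k * y) k x := by
  simpa using (hasDerivAt_id x).const_mul k

lemma aux_anti {g g' : ℝ → ℝ} {a k : ℝ}
    (hg : ContinuousOn g (Set.Ici a))
    (hg' : ∀ x, a < x → HasDerivAt g (g' x) x)
    (hk : ∀ x, a < x → g' x + k ≤ 0) :
    AntitoneOn (fun x => g x + k * x) (Set.Ici a) := by
  apply antitoneOn_of_deriv_nonpos (convex_Ici a)
  · exact hg.add (continuousOn_const.mul continuousOn_id)
  · intro x hx
    rw [interior_Ici] at hx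
    exact ((hg' x hx).add (aux_kmul x)).differentiableAt.differentiableWithinAt
  · intro x hx
    rw [interior_Ici] at hx
    have hd : HasDerivAt (fun x => g x + k * x) (g' x + k) x := (hg' x hx).add (aux_kmul x)
    rw [hd.deriv]
    exact hk x hx

lemma aux_mono {g g' : ℝ → ℝ} {a : ℝ}
    (hg : ContinuousOn g (Set.Ici a))
    (hg' : ∀ x, a < x → HasDerivAt g (g' x) x)
    (hk : ∀ x, a < x → 0 ≤ g' x) :
    MonotoneOn g (Set.Ici a) := by
  apply monotoneOn_of_deriv_nonneg (convex_Ici a) hg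
  · intro x hx
    rw [interior_Ici] at hx
    exact (hg' x hx).differentiableAt.differentiableWithinAt
  · intro x hx
    rw [interior_Ici] at hx
    rw [(hg' x hx).deriv]
    exact hk x hx

lemma aux_tsqrt (t : ℝ) :
    HasDerivAt (fun r : ℝ => r * Real.sqrt r) ((3 / 2) * Real.sqrt t) t := by
  rcases lt_trichotomy t 0 with ht | rfl | ht
  · have hzero : Real.sqrt t = 0 := Real.sqrt_eq_zero_of_nonpos ht.le
    rw [hzero, mul_zero]
    have : (fun r : ℝ => r * Real.sqrt r) =ᶠ[nhds t] fun _ => 0 := by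
      filter_upwards [Iio_mem_nhds ht] with r hr
      rw [Real.sqrt_eq_zero_of_nonpos (le_of_lt hr), mul_zero]
    exact (hasDerivAt_const t 0).congr_of_eventuallyEq this
  · rw [Real.sqrt_zero, mul_zero]
    rw [hasDerivAt_iff_tendsto_slope]
    have heq : ∀ r : ℝ, r ≠ 0 → slope (fun r : ℝ => r * Real.sqrt r) 0 r = Real.sqrt r := by
      intro r hr
      simp [slope, hr, mul_comm, mul_div_assoc, div_self hr]
    have : Filter.Tendsto Real.sqrt (nhdsWithin 0 {(0:ℝ)}ᶜ) (nhds 0) := by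
      have := (Real.continuous_sqrt.tendsto 0)
      rw [Real.sqrt_zero] at this
      exact this.mono_left nhdsWithin_le_nhds
    exact this.congr' (by filter_upwards [self_mem_nhdsWithin] with r hr; exact (heq r hr).symm)
  · have h1 : HasDerivAt (fun r : ℝ => r * Real.sqrt r)
        (1 * Real.sqrt t + t * (1 / (2 * Real.sqrt t))) t :=
      (hasDerivAt_id t).mul (Real.hasDerivAt_sqrt (ne_of_gt ht))
    convert h1 using 1
    have hst : Real.sqrt t > 0 := Real.sqrt_pos.mpr ht
    have ht2 : Real.sqrt t * Real.sqrt t = t := Real.mul_self_sqrt ht.le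
    field_simp
    nlinarith

lemma aux_lip (s : ℝ) (hs : 0 < s) :
    LipschitzOnWith (Real.toNNReal (3 * s))
      (fun y : ℝ => 2 * s * ((1 - y) * Real.sqrt (1 - y))) (Icc 0 1) := by
  apply Convex.lipschitzOnWith_of_nnnorm_hasDerivWithin_le (f' := fun y =>
      2 * s * ((3 / 2) * Real.sqrt (1 - y) * (-1))) (convex_Icc 0 1)
  · intro y _
    have h1 : HasDerivAt (fun y : ℝ => 1 - y) (-1) y := by
      exact (hasDerivAt_id' y).const_sub 1
    have h2 : HasDerivAt (fun y : ℝ => (1 - y) * Real.sqrt (1 - y))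
        ((3 / 2) * Real.sqrt (1 - y) * (-1)) y :=
      (aux_tsqrt (1 - y)).comp y h1
    exact ((h2.const_mul (2 * s)).hasDerivWithinAt)
  · intro y hy
    rw [← NNReal.coe_le_coe, coe_nnnorm, Real.coe_toNNReal _ (by positivity)]
    have h1 : Real.sqrt (1 - y) ≤ 1 := Real.sqrt_le_one.mpr (by linarith [hy.1])
    have h0 : 0 ≤ Real.sqrt (1 - y) := Real.sqrt_nonneg _
    rw [Real.norm_eq_abs, abs_le]
    constructor <;> nlinarith

lemma aux_w (s : ℝ) (hs : 0 < s) (x : ℝ) (hx : 0 ≤ x) :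
    HasDerivAt (fun x : ℝ => 1 - 1 / (s * x + 1) ^ 2)
      (2 * s * ((1 - (1 - 1 / (s * x + 1) ^ 2)) *
        Real.sqrt (1 - (1 - 1 / (s * x + 1) ^ 2)))) x := by
  have hA : 0 < s * x + 1 := by nlinarith
  have h1 : HasDerivAt (fun x : ℝ => s * x + 1) s x := by
    simpa using ((hasDerivAt_id x).const_mul s).add_const 1
  have h2 : HasDerivAt (fun x : ℝ => (s * x + 1) ^ 2) (2 * (s * x + 1) ^ 1 * s) x := h1.pow 2
  have h3 : HasDerivAt (fun x : ℝ => ((s * x + 1) ^ 2)⁻¹)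
      (-(2 * (s * x + 1) ^ 1 * s) / ((s * x + 1) ^ 2) ^ 2) x := h2.inv (by positivity)
  have h4 := (h3.const_sub 1)
  have heq : (fun x : ℝ => 1 - ((s * x + 1) ^ 2)⁻¹) = fun x : ℝ => 1 - 1 / (s * x + 1) ^ 2 := by
    funext y; rw [one_div]
  rw [heq] at h4
  refine h4.congr_deriv (Eq.symm ?_)
  have hsq : Real.sqrt (1 - (1 - 1 / (s * x + 1) ^ 2)) = 1 / (s * x + 1) := by
    rw [show 1 - (1 - 1 / (s * x + 1) ^ 2) = 1 / (s * x + 1) ^ 2 by ring,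
      show (1:ℝ) / (s * x + 1) ^ 2 = (1 / (s * x + 1)) ^ 2 by rw [div_pow, one_pow]]
    exact Real.sqrt_sq (by positivity)
  rw [hsq, pow_one, neg_div, neg_neg, eq_div_iff (by positivity : ((s * x + 1) ^ 2) ^ 2 ≠ 0)]
  field_simp
  ring

/-- Any nonnegative C² solution of the stationary equation with u(0) = 0 is
bounded above by 1, and consequently equals the explicit solution
1 − 1/(√(λ/6)·x + 1)². -/
theorem stmt_8 (lam : ℝ) (hlam : 0 < lam) (u : ℝ → ℝ)
    (hreg : ContDiffOn ℝ 2 u (Set.Ici 0))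
    (hode : ∀ x ≥ 0, (1 / 2) * iteratedDerivWithin 2 u (Set.Ici 0) x
      + (lam / 2) * (u x - 1) ^ 2 = 0)
    (h0 : u 0 = 0)
    (hnn : ∀ x ≥ 0, 0 ≤ u x) :
    (∀ x ≥ 0, u x ≤ 1) ∧
      ∀ x ≥ 0, u x = 1 - 1 / (Real.sqrt (lam / 6) * x + 1) ^ 2 := by
  have hUD : UniqueDiffOn ℝ (Set.Ici (0:ℝ)) := uniqueDiffOn_Ici 0
  set f := derivWithin u (Set.Ici 0) with hfdef
  have hu_cont : ContinuousOn u (Set.Ici 0) := hreg.continuousOn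
  have hu_diff : DifferentiableOn ℝ u (Set.Ici 0) := hreg.differentiableOn (by norm_num)
  have hf_smooth : ContDiffOn ℝ 1 f (Set.Ici 0) := hreg.derivWithin hUD (by norm_num)
  have hf_cont : ContinuousOn f (Set.Ici 0) := hf_smooth.continuousOn
  have hf_diff : DifferentiableOn ℝ f (Set.Ici 0) := hf_smooth.differentiableOn (by norm_num)
  have hu' : ∀ x ∈ Set.Ici (0:ℝ), HasDerivWithinAt u (f x) (Set.Ici 0) x :=
    fun x hx => (hu_diff x hx).hasDerivWithinAt
  have hode2 : ∀ x ∈ Set.Ici (0:ℝ), derivWithin f (Set.Ici 0) x = -(lam * (u x - 1) ^ 2) := by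
    intro x hx
    have h1 := hode x hx
    have h2 : iteratedDerivWithin 2 u (Set.Ici 0) x = derivWithin f (Set.Ici 0) x := by
      rw [show (2:ℕ) = 1 + 1 from rfl, iteratedDerivWithin_succ]
      exact derivWithin_congr (fun y hy => congrFun iteratedDerivWithin_one y)
        (congrFun iteratedDerivWithin_one x)
    rw [h2] at h1
    linarith
  have hf' : ∀ x ∈ Set.Ici (0:ℝ), HasDerivWithinAt f (-(lam * (u x - 1) ^ 2)) (Set.Ici 0) x := by
    intro x hx
    have := (hf_diff x hx).hasDerivWithinAt
    rwa [hode2 x hx] at this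
  have huD : ∀ x : ℝ, 0 < x → HasDerivAt u (f x) x := fun x hx =>
    (hu' x (le_of_lt hx)).hasDerivAt (Ici_mem_nhds hx)
  have hfD : ∀ x : ℝ, 0 < x → HasDerivAt f (-(lam * (u x - 1) ^ 2)) x := fun x hx =>
    (hf' x (le_of_lt hx)).hasDerivAt (Ici_mem_nhds hx)
  -- f is nonnegative
  have hf_nonneg : ∀ x ≥ (0:ℝ), 0 ≤ f x := by
    by_contra hcon
    push_neg at hcon
    obtain ⟨x0, hx0, hfx0⟩ := hcon
    have hf_anti : AntitoneOn f (Set.Ici 0) := by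
      apply antitoneOn_of_deriv_nonpos (convex_Ici 0) hf_cont
      · intro x hx
        rw [interior_Ici] at hx
        exact (hfD x hx).differentiableAt.differentiableWithinAt
      · intro x hx
        rw [interior_Ici] at hx
        rw [(hfD x hx).deriv]
        nlinarith [sq_nonneg (u x - 1)]
    refine aux_escape (g := u) (a := x0) (k := -f x0) (by linarith) ?_
      (fun x hx => hnn x (le_trans hx0 hx))
    refine aux_anti (g' := f) (hu_cont.mono (Ici_subset_Ici.mpr hx0))
      (fun x hx => huD x (lt_of_le_of_lt hx0 hx)) ?_
    intro x hx
    have := hf_anti (mem_Ici.mpr hx0) (mem_Ici.mpr (le_trans hx0 hx.le)) hx.le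
    linarith
  -- u is monotone
  have hu_mono : MonotoneOn u (Set.Ici 0) :=
    aux_mono hu_cont huD (fun x hx => hf_nonneg x hx.le)
  -- u ≤ 1
  have hle1 : ∀ x ≥ (0:ℝ), u x ≤ 1 := by
    by_contra hcon
    push_neg at hcon
    obtain ⟨x0, hx0, hux0⟩ := hcon
    refine aux_escape (g := f) (a := x0) (k := lam * (u x0 - 1) ^ 2)
      (mul_pos hlam (pow_pos (by linarith) 2)) ?_ (fun x hx => hf_nonneg x (le_trans hx0 hx))
    refine aux_anti (g' := fun x => -(lam * (u x - 1) ^ 2))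
      (hf_cont.mono (Ici_subset_Ici.mpr hx0))
      (fun x hx => hfD x (lt_of_le_of_lt hx0 hx)) ?_
    intro x hx
    have hmono := hu_mono (mem_Ici.mpr hx0) (mem_Ici.mpr (le_trans hx0 hx.le)) hx.le
    show -(lam * (u x - 1) ^ 2) + lam * (u x0 - 1) ^ 2 ≤ 0
    nlinarith [mul_nonneg (sub_nonneg.mpr hmono) (by linarith : (0:ℝ) ≤ u x + u x0 - 2)]
  -- energy is constant
  have hEconst : ∀ x ≥ (0:ℝ),
      f x ^ 2 / 2 + lam / 3 * (u x - 1) ^ 3 = f 0 ^ 2 / 2 - lam / 3 := by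
    set E : ℝ → ℝ := fun x => f x ^ 2 / 2 + (lam / 3) * (u x - 1) ^ 3 with hEdef
    have hE' : ∀ x : ℝ, 0 < x → HasDerivAt E 0 x := by
      intro x hx
      have h1 : HasDerivAt (fun y => f y ^ 2 / 2)
          (2 * f x ^ 1 * -(lam * (u x - 1) ^ 2) / 2) x := ((hfD x hx).pow 2).div_const 2
      have h2 : HasDerivAt (fun y => (lam / 3) * (u y - 1) ^ 3)
          ((lam / 3) * (3 * (u x - 1) ^ 2 * f x)) x :=
        (((huD x hx).sub_const 1).pow 3).const_mul (lam / 3)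
      have h3 := h1.add h2
      exact h3.congr_deriv (by ring)
    have hE_cont : ContinuousOn E (Set.Ici 0) :=
      ((hf_cont.pow 2).div_const 2).add
        (continuousOn_const.mul ((hu_cont.sub continuousOn_const).pow 3))
    have hanti : AntitoneOn E (Set.Ici 0) := by
      apply antitoneOn_of_deriv_nonpos (convex_Ici 0) hE_cont
      · intro y hy
        rw [interior_Ici] at hy
        exact (hE' y hy).differentiableAt.differentiableWithinAt
      · intro y hy
        rw [interior_Ici] at hy
        rw [(hE' y hy).deriv]
    have hmono : MonotoneOn E (Set.Ici 0) := by
      apply monotoneOn_of_deriv_nonneg (convex_Ici 0) hE_cont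
      · intro y hy
        rw [interior_Ici] at hy
        exact (hE' y hy).differentiableAt.differentiableWithinAt
      · intro y hy
        rw [interior_Ici] at hy
        rw [(hE' y hy).deriv]
    intro x hx
    have heq : E x = E 0 := le_antisymm (hanti self_mem_Ici (mem_Ici.mpr hx) hx)
      (hmono self_mem_Ici (mem_Ici.mpr hx) hx)
    have hval : E 0 = f 0 ^ 2 / 2 - lam / 3 := by
      simp only [hEdef, h0]
      ring
    rw [hval] at heq
    exact heq
  -- case analysis on the sign of the energy
  rcases lt_trichotomy (f 0 ^ 2 / 2 - lam / 3) 0 with hE0 | hE0 | hE0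
  · -- negative energy : impossible
    exfalso
    refine aux_escape (g := f) (a := 0) (k := lam - 3 / 2 * f 0 ^ 2) (by linarith) ?_ hf_nonneg
    refine aux_anti (g' := fun x => -(lam * (u x - 1) ^ 2)) hf_cont hfD ?_
    intro x hx
    have hE := hEconst x hx.le
    have h1 : 0 ≤ u x := hnn x hx.le
    show -(lam * (u x - 1) ^ 2) + (lam - 3 / 2 * f 0 ^ 2) ≤ 0
    have hQ : lam * (u x - 1) ^ 3 = 3 / 2 * f 0 ^ 2 - lam - 3 / 2 * f x ^ 2 := by
      linear_combination 3 * hE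
    have hP : 0 ≤ lam * (u x - 1) ^ 2 + lam * (u x - 1) ^ 3 := by
      rw [show lam * (u x - 1) ^ 2 + lam * (u x - 1) ^ 3 = lam * ((u x - 1) ^ 2 * u x) by ring]
      exact mul_nonneg hlam.le (mul_nonneg (sq_nonneg _) h1)
    linarith [sq_nonneg (f x)]
  · -- zero energy : the main case
    have hs : 0 < Real.sqrt (lam / 6) := Real.sqrt_pos.mpr (by linarith)
    set s : ℝ := Real.sqrt (lam / 6) with hsdef
    have hs2 : s ^ 2 = lam / 6 := Real.sq_sqrt (by linarith)
    -- the first-order ODE for u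
    have hfeq : ∀ x ≥ (0:ℝ), f x = 2 * s * ((1 - u x) * Real.sqrt (1 - u x)) := by
      intro x hx
      have h1 : 0 ≤ 1 - u x := by linarith [hle1 x hx]
      have hE : f x ^ 2 / 2 + lam / 3 * (u x - 1) ^ 3 = 0 := by
        rw [hEconst x hx, hE0]
      have h2 : f x ^ 2 = (2 * s * ((1 - u x) * Real.sqrt (1 - u x))) ^ 2 := by
        have hsq : Real.sqrt (1 - u x) ^ 2 = 1 - u x := Real.sq_sqrt h1
        have hexp : (2 * s * ((1 - u x) * Real.sqrt (1 - u x))) ^ 2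
            = 4 * s ^ 2 * ((1 - u x) ^ 2 * Real.sqrt (1 - u x) ^ 2) := by ring
        rw [hexp, hsq, hs2]
        linear_combination (2 : ℝ) * hE
      calc f x = Real.sqrt (f x ^ 2) := (Real.sqrt_sq (hf_nonneg x hx)).symm
        _ = Real.sqrt ((2 * s * ((1 - u x) * Real.sqrt (1 - u x))) ^ 2) := by rw [h2]
        _ = 2 * s * ((1 - u x) * Real.sqrt (1 - u x)) := Real.sqrt_sq (by positivity)
    -- the explicit solution
    set w : ℝ → ℝ := fun x => 1 - 1 / (s * x + 1) ^ 2 with hwdef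
    have hw0 : w 0 = 0 := by simp [hwdef]
    have hwD : ∀ x ≥ (0:ℝ), HasDerivAt w (2 * s * ((1 - w x) * Real.sqrt (1 - w x))) x :=
      fun x hx => aux_w s hs x hx
    have hwmem : ∀ x ≥ (0:ℝ), w x ∈ Set.Icc (0:ℝ) 1 := by
      intro x hx
      have hA : (1:ℝ) ≤ (s * x + 1) ^ 2 := by nlinarith [mul_nonneg hs.le hx]
      have hA0 : (0:ℝ) < (s * x + 1) ^ 2 := by linarith
      constructor
      · simp only [hwdef, sub_nonneg]
        rw [div_le_one hA0]
        linarith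
      · simp only [hwdef]
        have : 0 < 1 / (s * x + 1) ^ 2 := by positivity
        linarith
    have humem : ∀ x ≥ (0:ℝ), u x ∈ Set.Icc (0:ℝ) 1 :=
      fun x hx => ⟨hnn x hx, hle1 x hx⟩
    have key : ∀ b : ℝ, 0 < b → Set.EqOn u w (Set.Icc 0 b) := by
      intro b hb
      apply ODE_solution_unique_of_mem_Icc_right
        (v := fun _ y => 2 * s * ((1 - y) * Real.sqrt (1 - y)))
        (s := fun _ => Set.Icc (0:ℝ) 1) (K := Real.toNNReal (3 * s))
        (fun _ _ => aux_lip s hs)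
        (hu_cont.mono (Icc_subset_Ici_self))
        ?_ (fun t ht => humem t ht.1)
        ?_ ?_ (fun t ht => hwmem t ht.1)
        (by rw [h0, hw0])
      · intro t ht
        have h1 := (hu' t ht.1).mono (Ici_subset_Ici.mpr ht.1)
        rwa [hfeq t ht.1] at h1
      · intro t ht
        exact ((hwD t ht.1).continuousAt.continuousWithinAt)
      · intro t ht
        exact (hwD t ht.1).hasDerivWithinAt
    refine ⟨hle1, fun x hx => ?_⟩
    have := key (x + 1) (by linarith) (Set.mem_Icc.mpr ⟨hx, by linarith⟩)
    rw [this]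
  · -- positive energy : impossible
    exfalso
    set m : ℝ := Real.sqrt (f 0 ^ 2 - 2 / 3 * lam) with hmdef
    have hm0 : 0 < f 0 ^ 2 - 2 / 3 * lam := by linarith
    have hm : 0 < m := Real.sqrt_pos.mpr hm0
    have hm2 : m ^ 2 = f 0 ^ 2 - 2 / 3 * lam := Real.sq_sqrt hm0.le
    have hflb : ∀ x ≥ (0:ℝ), m ≤ f x := by
      intro x hx
      have hE := hEconst x hx
      have h1 : 0 ≤ 1 - u x := by linarith [hle1 x hx]
      have h2 : 0 ≤ (1 - u x) ^ 3 := pow_nonneg h1 3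
      have h3 : f x ^ 2 ≥ m ^ 2 := by
        rw [hm2]
        nlinarith [mul_nonneg hlam.le h2]
      nlinarith [hf_nonneg x hx]
    refine aux_escape (g := fun x => 1 - u x) (a := 0) (k := m) hm ?_
      (fun x hx => by show (0:ℝ) ≤ 1 - u x; linarith [hle1 x hx])
    refine aux_anti (g' := fun x => -f x) (continuousOn_const.sub hu_cont)
      (fun x hx => (huD x hx).const_sub 1) ?_
    intro x hx
    show -f x + m ≤ 0
    linarith [hflb x hx.le]
end
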